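/- arXiv:1803.11043 — 5 statements merged into one kernel-verified Lean document; each statement's English description precedes it below -/
import Mathlib

section
/- Let T > 0 and let G : ℝ^N → [0,∞) be a G-function. Let V(t,x) = K(t,x) − W(t,x) with K, W ∈ C¹([-T,T]×ℝ^N, ℝ), and assume there exist ε₀ > 0 and r > 0 such that W(t,x) ≥ (3+ε₀)·max{K(t,x), G(x)} whenever |x| > r and t ∈ [-T,T]. Let f : [-T,T] → ℝ^N be measurable with ∫_{-T}^{T} G*(f(t)) dt < ∞, and define J(u) = ∫_{-T}^{T} [G(u̇(t)) + V(t,u(t)) + ⟨f(t),u(t)⟩] dt. Then for every ρ > 0 there exists e ∈ W¹_T L^G with ‖e‖_W > ρ and J(e) < 0. -/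
open MeasureTheory Set Filter
open scoped RealInnerProductSpace

noncomputable section

/-- G-function -/
def IsGFun {N : ℕ} (G : EuclideanSpace ℝ (Fin N) → ℝ) : Prop :=
  ContDiff ℝ 1 G ∧ ConvexOn ℝ Set.univ G ∧ (∀ x, G (-x) = G x) ∧ G 0 = 0 ∧
    (∀ x, 0 ≤ G x) ∧
    Filter.Tendsto (fun x => G x / ‖x‖) (Filter.cocompact (EuclideanSpace ℝ (Fin N)))
      Filter.atTop

def Delta2Global {N : ℕ} (G : EuclideanSpace ℝ (Fin N) → ℝ) : Prop :=
  ∃ K₁ : ℝ, 2 < K₁ ∧ ∀ x, G ((2 : ℝ) • x) ≤ K₁ * G x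

def Nabla2Global {N : ℕ} (G : EuclideanSpace ℝ (Fin N) → ℝ) : Prop :=
  ∃ K₂ : ℝ, 1 < K₂ ∧ ∀ x, G x ≤ (1 / (2 * K₂)) * G (K₂ • x)

def Delta2 {N : ℕ} (G : EuclideanSpace ℝ (Fin N) → ℝ) : Prop :=
  ∃ K₁ : ℝ, 2 < K₁ ∧ ∃ M₁ : ℝ, 0 ≤ M₁ ∧ ∀ x, M₁ ≤ ‖x‖ → G ((2 : ℝ) • x) ≤ K₁ * G x

def Nabla2 {N : ℕ} (G : EuclideanSpace ℝ (Fin N) → ℝ) : Prop :=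
  ∃ K₂ : ℝ, 1 < K₂ ∧ ∃ M₂ : ℝ, 0 ≤ M₂ ∧ ∀ x, M₂ ≤ ‖x‖ → G x ≤ (1 / (2 * K₂)) * G (K₂ • x)

/-- modular -/
def modular {N : ℕ} (T : ℝ) (G : EuclideanSpace ℝ (Fin N) → ℝ)
    (u : ℝ → EuclideanSpace ℝ (Fin N)) : ℝ :=
  ∫ t in (-T)..T, G (u t)

/-- membership in the Orlicz space L^G on [-T,T] -/
def MemLG {N : ℕ} (T : ℝ) (G : EuclideanSpace ℝ (Fin N) → ℝ)
    (u : ℝ → EuclideanSpace ℝ (Fin N)) : Prop :=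
  AEStronglyMeasurable u (volume.restrict (Set.Icc (-T) T)) ∧
    IntegrableOn (fun t => G (u t)) (Set.Icc (-T) T)

/-- Luxemburg norm -/
def luxNorm {N : ℕ} (T : ℝ) (G : EuclideanSpace ℝ (Fin N) → ℝ)
    (u : ℝ → EuclideanSpace ℝ (Fin N)) : ℝ :=
  sInf {l : ℝ | 0 < l ∧ ∫ t in (-T)..T, G (l⁻¹ • u t) ≤ 1}

/-- membership in the periodic Orlicz–Sobolev space W¹_T L^G :
`u` is absolutely continuous with derivative `u'`, both in `L^G`, and `u(-T) = u(T)`. -/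
def MemW {N : ℕ} (T : ℝ) (G : EuclideanSpace ℝ (Fin N) → ℝ)
    (u u' : ℝ → EuclideanSpace ℝ (Fin N)) : Prop :=
  (∀ t ∈ Set.Icc (-T) T, u t = u (-T) + ∫ s in (-T)..t, u' s) ∧
    IntegrableOn u' (Set.Icc (-T) T) ∧ MemLG T G u ∧ MemLG T G u' ∧ u (-T) = u T

/-- Sobolev norm ‖u‖_W = ‖u‖_G + ‖u̇‖_G -/
def WNorm {N : ℕ} (T : ℝ) (G : EuclideanSpace ℝ (Fin N) → ℝ)
    (u u' : ℝ → EuclideanSpace ℝ (Fin N)) : ℝ :=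
  luxNorm T G u + luxNorm T G u'

/-- Simonenko lower index p_G -/
def simonP {N : ℕ} (G : EuclideanSpace ℝ (Fin N) → ℝ) : ℝ :=
  sInf {r : ℝ | ∃ x, x ≠ 0 ∧ r = ⟪x, gradient G x⟫ / G x}

/-- Simonenko upper index q_G -/
def simonQ {N : ℕ} (G : EuclideanSpace ℝ (Fin N) → ℝ) : ℝ :=
  sSup {r : ℝ | ∃ x, x ≠ 0 ∧ r = ⟪x, gradient G x⟫ / G x}

/-- the index q_G^∞ = limsup_{|x|→∞} ⟨x,∇G(x)⟩/G(x) -/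
def simonQInf {N : ℕ} (G : EuclideanSpace ℝ (Fin N) → ℝ) : ℝ :=
  Filter.limsup (fun x => ⟪x, gradient G x⟫ / G x)
    (Filter.cocompact (EuclideanSpace ℝ (Fin N)))

/-- Fenchel conjugate -/
def fenchel {N : ℕ} (G : EuclideanSpace ℝ (Fin N) → ℝ)
    (y : EuclideanSpace ℝ (Fin N)) : ℝ :=
  sSup {r : ℝ | ∃ x, r = ⟪x, y⟫ - G x}


private lemma gfun_growth {N : ℕ} {G : EuclideanSpace ℝ (Fin N) → ℝ}
    (hG : Filter.Tendsto (fun x => G x / ‖x‖) (Filter.cocompact (EuclideanSpace ℝ (Fin N)))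
      Filter.atTop) (A : ℝ) :
    ∃ R : ℝ, 0 < R ∧ ∀ z : EuclideanSpace ℝ (Fin N), R ≤ ‖z‖ → A * ‖z‖ ≤ G z := by
  have h := hG.eventually_ge_atTop A
  rw [Filter.hasBasis_cocompact.eventually_iff] at h
  obtain ⟨Kc, hKc, hKP⟩ := h
  obtain ⟨R', hR'⟩ := hKc.isBounded.subset_closedBall 0
  refine ⟨max R' 0 + 1, by positivity, fun z hz => ?_⟩
  have hzK : z ∉ Kc := by
    intro hzK
    have h2 := hR' hzK
    rw [Metric.mem_closedBall, dist_zero_right] at h2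
    have := le_max_left R' (0:ℝ)
    linarith
  have h1 : A ≤ G z / ‖z‖ := hKP hzK
  have hz0 : 0 < ‖z‖ := by
    have : (0:ℝ) < max R' 0 + 1 := by positivity
    linarith
  exact (le_div_iff₀ hz0).mp h1

private lemma fenchel_bound {N : ℕ} {G : EuclideanSpace ℝ (Fin N) → ℝ}
    (hG : IsGFun G) (x y : EuclideanSpace ℝ (Fin N)) :
    ⟪x, y⟫ ≤ G x + fenchel G y := by
  obtain ⟨R, hR0, hR⟩ := gfun_growth hG.2.2.2.2.2 ‖y‖
  have hbdd : BddAbove {r : ℝ | ∃ z, r = ⟪z, y⟫ - G z} := by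
    refine ⟨R * ‖y‖, fun s hs => ?_⟩
    obtain ⟨z, rfl⟩ := hs
    have h2 : ⟪z, y⟫ ≤ ‖z‖ * ‖y‖ := real_inner_le_norm z y
    rcases le_or_gt R ‖z‖ with h | h
    · have h1 := hR z h
      nlinarith [norm_nonneg y]
    · have h3 := hG.2.2.2.2.1 z
      nlinarith [norm_nonneg y, norm_nonneg z]
  have h4 : ⟪x, y⟫ - G x ≤ fenchel G y := le_csSup hbdd ⟨x, rfl⟩
  linarith

set_option maxHeartbeats 1000000 in
/-- Lemma 3.2 of the paper: the action functional is negative at some point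
outside any ball. -/
theorem exists_negative_energy {N : ℕ} (hN : 0 < N) (T : ℝ) (hT : 0 < T)
    (G : EuclideanSpace ℝ (Fin N) → ℝ) (hG : IsGFun G)
    (K W : ℝ → EuclideanSpace ℝ (Fin N) → ℝ)
    (hK : ContDiffOn ℝ 1 (fun p : ℝ × EuclideanSpace ℝ (Fin N) => K p.1 p.2)
      (Set.Icc (-T) T ×ˢ Set.univ))
    (hWsm : ContDiffOn ℝ 1 (fun p : ℝ × EuclideanSpace ℝ (Fin N) => W p.1 p.2)
      (Set.Icc (-T) T ×ˢ Set.univ))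
    (V : ℝ → EuclideanSpace ℝ (Fin N) → ℝ)
    (hV : ∀ t x, V t x = K t x - W t x)
    (ε₀ r : ℝ) (hε₀ : 0 < ε₀) (hr : 0 < r)
    (hWbig : ∀ t ∈ Set.Icc (-T) T, ∀ x : EuclideanSpace ℝ (Fin N),
      r < ‖x‖ → (3 + ε₀) * max (K t x) (G x) ≤ W t x)
    (f : ℝ → EuclideanSpace ℝ (Fin N))
    (hfm : AEStronglyMeasurable f (volume.restrict (Set.Icc (-T) T)))
    (hf : IntegrableOn (fun t => fenchel G (f t)) (Set.Icc (-T) T)) :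
    ∀ ρ > (0 : ℝ), ∃ e e' : ℝ → EuclideanSpace ℝ (Fin N), MemW T G e e' ∧
      ρ < WNorm T G e e' ∧
      (∫ t in (-T)..T, (G (e' t) + V t (e t) + ⟪f t, e t⟫)) < 0 := by
  intro ρ hρ
  have hGc1 := hG.1
  have hGconv := hG.2.1
  have hGeven := hG.2.2.1
  have hG0 := hG.2.2.2.1
  have hGpos := hG.2.2.2.2.1
  have hGgrow := hG.2.2.2.2.2
  obtain ⟨R₁, hR₁0, hR₁⟩ := gfun_growth hGgrow 1
  set M : ℝ := max R₁ (1 / (2 * T)) with hM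
  have hM0 : 0 < M := lt_of_lt_of_le hR₁0 (le_max_left _ _)
  set C : ℝ := ∫ t in (-T)..T, fenchel G (f t) with hC
  set c : ℝ := max (max ((ρ + 1) * M) (r + 1)) (C / ((1 + ε₀) * (2 * T)) + 1) with hc
  have hc_ρM : (ρ + 1) * M ≤ c := le_trans (le_max_left _ _) (le_max_left _ _)
  have hc_r : r + 1 ≤ c := le_trans (le_max_right _ _) (le_max_left _ _)
  have hc_C : C / ((1 + ε₀) * (2 * T)) + 1 ≤ c := le_max_right _ _
  have hc0 : 0 < c := by linarith
  set v : EuclideanSpace ℝ (Fin N) := EuclideanSpace.single ⟨0, hN⟩ (1:ℝ) with hv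
  have hvnorm : ‖v‖ = 1 := by rw [hv, EuclideanSpace.norm_single]; norm_num
  set x : EuclideanSpace ℝ (Fin N) := c • v with hxdef
  have hxnorm : ‖x‖ = c := by
    rw [hxdef, norm_smul, hvnorm, mul_one, Real.norm_eq_abs, abs_of_pos hc0]
  have hMc : M ≤ c := by nlinarith
  have hGx_ge : c ≤ G x := by
    have h1 : R₁ ≤ ‖x‖ := by rw [hxnorm]; exact le_trans (le_max_left _ _) hMc
    have h2 := hR₁ x h1
    rw [hxnorm, one_mul] at h2
    exact h2
  refine ⟨fun _ => x, fun _ => (0 : EuclideanSpace ℝ (Fin N)), ?_, ?_, ?_⟩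
  · refine ⟨fun t _ => by simp, ?_, ?_, ?_, rfl⟩
    · exact (integrable_zero _ _ _).integrableOn
    · exact ⟨aestronglyMeasurable_const,
        integrableOn_const measure_Icc_lt_top.ne⟩
    · exact ⟨aestronglyMeasurable_const,
        integrableOn_const measure_Icc_lt_top.ne⟩
  · -- norm bound
    have hlux0 : 0 ≤ luxNorm T G (fun _ => (0 : EuclideanSpace ℝ (Fin N))) :=
      Real.sInf_nonneg (fun l hl => hl.1.le)
    have hconvineq : ∀ a : ℝ, 0 ≤ a → a ≤ 1 → G (a • x) ≤ a * G x := by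
      intro a ha ha1
      have h := hGconv.2 (Set.mem_univ x) (Set.mem_univ (0 : EuclideanSpace ℝ (Fin N)))
        ha (by linarith : (0:ℝ) ≤ 1 - a) (by ring)
      simpa [hG0] using h
    have hluxe : ρ + 1 ≤ luxNorm T G (fun _ => x) := by
      have hne : ∃ l : ℝ, 0 < l ∧ (∫ t in (-T)..T, G (l⁻¹ • x)) ≤ 1 := by
        refine ⟨max 1 (2 * T * G x), lt_of_lt_of_le one_pos (le_max_left _ _), ?_⟩
        set l₀ : ℝ := max 1 (2 * T * G x) with hl₀
        have hl₀1 : 1 ≤ l₀ := le_max_left _ _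
        have hl₀pos : 0 < l₀ := by linarith
        have hGx0 : 0 ≤ G x := hGpos x
        have h1 : G (l₀⁻¹ • x) ≤ l₀⁻¹ * G x := by
          refine hconvineq _ (by positivity) ?_
          rw [inv_le_one_iff₀]; right; exact hl₀1
        rw [intervalIntegral.integral_const, smul_eq_mul]
        have h2 : 2 * T * G x ≤ l₀ := le_max_right _ _
        have h3 : l₀⁻¹ * G x * l₀ = G x := by field_simp
        calc (T - -T) * G (l₀⁻¹ • x) = 2 * T * G (l₀⁻¹ • x) := by ring
          _ ≤ 2 * T * (l₀⁻¹ * G x) := by nlinarith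
          _ ≤ 1 := by
              rw [← inv_mul_cancel₀ (ne_of_gt hl₀pos)]
              have : 2 * T * (l₀⁻¹ * G x) = l₀⁻¹ * (2 * T * G x) := by ring
              rw [this]
              exact mul_le_mul_of_nonneg_left h2 (by positivity)
      refine le_csInf hne ?_
      rintro l ⟨hl0, hl1⟩
      rw [intervalIntegral.integral_const, smul_eq_mul] at hl1
      have hG1 : G (l⁻¹ • x) ≤ 1 / (2 * T) := by
        rw [le_div_iff₀ (by linarith : (0:ℝ) < 2 * T)]
        nlinarith [hl1]
      have hnorm : ‖l⁻¹ • x‖ = l⁻¹ * c := by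
        rw [norm_smul, hxnorm, Real.norm_eq_abs, abs_of_pos (by positivity)]
      have hle : l⁻¹ * c ≤ M := by
        rcases le_or_gt R₁ ‖l⁻¹ • x‖ with h | h
        · have h1 := hR₁ _ h
          rw [hnorm] at h1
          calc l⁻¹ * c ≤ G (l⁻¹ • x) := by linarith
            _ ≤ 1 / (2 * T) := hG1
            _ ≤ M := le_max_right _ _
        · rw [hnorm] at h
          exact le_trans h.le (le_max_left _ _)
      have h5 : c ≤ M * l := by
        have h6 := mul_le_mul_of_nonneg_right hle hl0.le
        have h7 : l⁻¹ * c * l = c := by field_simp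
        rw [h7] at h6
        exact h6
      have h8 : (ρ + 1) * M ≤ l * M := by rw [mul_comm l M]; linarith
      exact le_of_mul_le_mul_right h8 hM0
    have : WNorm T G (fun _ => x) (fun _ => (0 : EuclideanSpace ℝ (Fin N)))
        = luxNorm T G (fun _ => x) + luxNorm T G (fun _ => (0 : EuclideanSpace ℝ (Fin N))) := rfl
    rw [this]
    linarith
  · -- negativity of the action
    have hxr : r < ‖x‖ := by rw [hxnorm]; linarith
    have hfen : ∀ t, ⟪f t, x⟫ ≤ G x + fenchel G (f t) := by
      intro t
      rw [real_inner_comm]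
      exact fenchel_bound hG x (f t)
    have hfen' : ∀ t, -(G x + fenchel G (f t)) ≤ ⟪f t, x⟫ := by
      intro t
      have h1 : ⟪-x, f t⟫ ≤ G (-x) + fenchel G (f t) := fenchel_bound hG (-x) (f t)
      rw [hGeven, inner_neg_left, real_inner_comm] at h1
      linarith
    have hKt : ContinuousOn (fun t => K t x) (Set.Icc (-T) T) := by
      have hmap : Set.MapsTo (fun t : ℝ => (t, x)) (Set.Icc (-T) T)
          (Set.Icc (-T) T ×ˢ (Set.univ : Set (EuclideanSpace ℝ (Fin N)))) :=
        fun t ht => ⟨ht, Set.mem_univ _⟩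
      exact hK.continuousOn.comp ((continuous_id.prodMk continuous_const).continuousOn) hmap
    have hWt : ContinuousOn (fun t => W t x) (Set.Icc (-T) T) := by
      have hmap : Set.MapsTo (fun t : ℝ => (t, x)) (Set.Icc (-T) T)
          (Set.Icc (-T) T ×ˢ (Set.univ : Set (EuclideanSpace ℝ (Fin N)))) :=
        fun t ht => ⟨ht, Set.mem_univ _⟩
      exact hWsm.continuousOn.comp ((continuous_id.prodMk continuous_const).continuousOn) hmap
    have hVint : IntegrableOn (fun t => V t x) (Set.Icc (-T) T) := by
      have : ContinuousOn (fun t => V t x) (Set.Icc (-T) T) := by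
        simp only [hV]
        exact hKt.sub hWt
      exact this.integrableOn_compact isCompact_Icc
    have hbnd : IntegrableOn (fun t => G x + fenchel G (f t)) (Set.Icc (-T) T) :=
      (integrableOn_const measure_Icc_lt_top.ne).add hf
    have hinner_int : IntegrableOn (fun t => ⟪f t, x⟫) (Set.Icc (-T) T) := by
      refine hbnd.mono' (hfm.inner aestronglyMeasurable_const) ?_
      refine Filter.Eventually.of_forall (fun t => ?_)
      rw [Real.norm_eq_abs, abs_le]
      exact ⟨hfen' t, by linarith [hfen t]⟩
    have hφint : IntervalIntegrable
        (fun t => G ((fun _ => (0:EuclideanSpace ℝ (Fin N))) t) + V t ((fun _ => x) t)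
          + ⟪f t, (fun _ => x) t⟫) volume (-T) T := by
      rw [intervalIntegrable_iff_integrableOn_Ioc_of_le (by linarith)]
      have hsum : IntegrableOn
          (fun t => G ((fun _ => (0:EuclideanSpace ℝ (Fin N))) t) + V t ((fun _ => x) t)
            + ⟪f t, (fun _ => x) t⟫) (Set.Icc (-T) T) :=
        ((integrableOn_const measure_Icc_lt_top.ne).add hVint).add hinner_int
      exact hsum.mono_set Set.Ioc_subset_Icc_self
    have hfenint : IntervalIntegrable (fun t => fenchel G (f t)) volume (-T) T := by
      rw [intervalIntegrable_iff_integrableOn_Ioc_of_le (by linarith)]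
      exact hf.mono_set Set.Ioc_subset_Icc_self
    have hψint : IntervalIntegrable
        (fun t => -((1 + ε₀) * G x) + fenchel G (f t)) volume (-T) T :=
      intervalIntegrable_const.add hfenint
    have hle : ∀ t ∈ Set.Icc (-T) T,
        G ((fun _ => (0:EuclideanSpace ℝ (Fin N))) t) + V t ((fun _ => x) t)
          + ⟪f t, (fun _ => x) t⟫ ≤ -((1 + ε₀) * G x) + fenchel G (f t) := by
      intro t ht
      simp only [hV, hG0]
      have hmax := hWbig t ht x hxr
      have h1 : K t x ≤ max (K t x) (G x) := le_max_left _ _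
      have h2 : G x ≤ max (K t x) (G x) := le_max_right _ _
      have h3 := hfen t
      nlinarith [hGpos x, mul_nonneg (by linarith : (0:ℝ) ≤ 2 + ε₀)
        (sub_nonneg.mpr h2)]
    have hmono := intervalIntegral.integral_mono_on (by linarith : -T ≤ T) hφint hψint hle
    have hψeq : (∫ t in (-T)..T, (-((1 + ε₀) * G x) + fenchel G (f t)))
        = 2 * T * (-((1 + ε₀) * G x)) + C := by
      rw [intervalIntegral.integral_add intervalIntegrable_const hfenint,
        intervalIntegral.integral_const, smul_eq_mul, ← hC]
      ring
    have hfinal : 2 * T * (-((1 + ε₀) * G x)) + C < 0 := by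
      have hpos : (0:ℝ) < (1 + ε₀) * (2 * T) := by positivity
      have h1 : C < c * ((1 + ε₀) * (2 * T)) := by
        have h2 : C / ((1 + ε₀) * (2 * T)) < c := by linarith
        exact (div_lt_iff₀ hpos).mp h2
      nlinarith [mul_le_mul_of_nonneg_right hGx_ge hpos.le]
    calc (∫ t in (-T)..T, (G ((fun _ => (0:EuclideanSpace ℝ (Fin N))) t)
            + V t ((fun _ => x) t) + ⟪f t, (fun _ => x) t⟫))
        ≤ 2 * T * (-((1 + ε₀) * G x)) + C := by rw [← hψeq]; exact hmono
      _ < 0 := hfinal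
end
end

section
/- Let T > 0 and let G : ℝ^N → [0,∞) be a G-function satisfying the Δ₂ and ∇₂ conditions globally. Let V : [-T,T]×ℝ^N → ℝ be continuous, and assume there exist a ∈ L¹([-T,T],ℝ), b > 1 and ρ₀ > 0 such that V(t,x) ≥ b·G(x) − a(t) whenever |x| ≤ ρ₀. Let f : [-T,T] → ℝ^N be measurable with R_{G*}(f) < ∞. Let C∞ > 0 be a constant such that ess sup_{t∈[-T,T]} |u(t)| ≤ C∞‖u‖_W for every u ∈ W¹_T L^G, set ρ = ρ₀/C∞, and assume R_{G*}(f) + ∫_{-T}^{T} a(t) dt < min{1, b−1}·(ρ/2)^{q_G} in case ρ ≤ 2, and R_{G*}(f) + ∫_{-T}^{T} a(t) dt < min{1, b−1}·(ρ/2)^{p_G} in case ρ > 2. Define J(u) = ∫_{-T}^{T} [G(u̇(t)) + V(t,u(t)) + ⟨f(t),u(t)⟩] dt. Then there exists α > 0 such that J(u) ≥ α for every u ∈ W¹_T L^G with ‖u‖_W = ρ. -/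
open MeasureTheory Set Filter
open scoped RealInnerProductSpace

noncomputable section

section AuxLemmas

variable {N : ℕ}
local notation "E" => EuclideanSpace ℝ (Fin N)

lemma aux_hasDerivAt {G : E → ℝ} (hG : ContDiff ℝ 1 G) (y : E) (d : E) (t : ℝ) :
    HasDerivAt (fun s : ℝ => G (y + s • d)) ⟪d, gradient G (y + t • d)⟫ t := by
  have hdiff : DifferentiableAt ℝ G (y + t • d) :=
    (hG.differentiable one_ne_zero).differentiableAt
  have hgrad := hdiff.hasGradientAt
  have hF : HasFDerivAt G ((InnerProductSpace.toDual ℝ E) (gradient G (y + t • d)))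
      (y + t • d) := hasGradientAt_iff_hasFDerivAt.mp hgrad
  have hc : HasDerivAt (fun s : ℝ => y + s • d) d t := by
    simpa using ((hasDerivAt_id t).smul_const d).const_add y
  have h2 : ⟪d, gradient G (y + t • d)⟫
      = (InnerProductSpace.toDual ℝ E) (gradient G (y + t • d)) d := by
    rw [InnerProductSpace.toDual_apply_apply, real_inner_comm]
  rw [h2]
  exact hF.comp_hasDerivAt t hc

lemma aux_firstOrder {G : E → ℝ} (hG : ContDiff ℝ 1 G) (hconv : ConvexOn ℝ Set.univ G)
    (y z : E) : G y + ⟪gradient G y, z - y⟫ ≤ G z := by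
  set d := z - y with hd
  have hD : HasDerivAt (fun s : ℝ => G (y + s • d)) ⟪d, gradient G y⟫ 0 := by
    simpa using aux_hasDerivAt hG y d 0
  have hslope : Tendsto (slope (fun s : ℝ => G (y + s • d)) 0) (nhdsWithin 0 (Set.Ioi 0))
      (nhds ⟪d, gradient G y⟫) :=
    (hasDerivAt_iff_tendsto_slope.mp hD).mono_left
      (nhdsWithin_mono _ (fun x hx => Set.mem_compl_singleton_iff.mpr (ne_of_gt hx)))
  have hle : ⟪d, gradient G y⟫ ≤ G z - G y := by
    refine le_of_tendsto hslope ?_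
    filter_upwards [Ioo_mem_nhdsGT_of_mem (Set.left_mem_Ico.mpr one_pos)] with t ht
    have h1 : G (y + t • d) ≤ (1 - t) * G y + t * G z := by
      have := hconv.2 (Set.mem_univ y) (Set.mem_univ z)
        (show (0:ℝ) ≤ 1 - t by linarith [ht.1, ht.2]) (le_of_lt ht.1) (by ring)
      have hyz : (1 - t) • y + t • z = y + t • d := by
        rw [hd]; module
      rw [hyz] at this
      simpa [smul_eq_mul] using this
    have ht0 : (0:ℝ) < t := ht.1
    rw [slope_def_field]
    simp only [zero_smul, add_zero, sub_zero]
    rw [div_le_iff₀ ht0]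
    nlinarith [h1]
  have h3 : ⟪gradient G y, z - y⟫ = ⟪d, gradient G y⟫ := real_inner_comm _ _
  rw [h3]; linarith

lemma aux_ray_mono {G : E → ℝ} (hconv : ConvexOn ℝ Set.univ G) (h0 : G 0 = 0)
    (hpos : ∀ x, 0 ≤ G x) (x : E) {s t : ℝ} (hs : 0 ≤ s) (hst : s ≤ t) :
    G (s • x) ≤ G (t • x) := by
  rcases eq_or_lt_of_le (hs.trans hst) with ht | ht
  · have : s = 0 := le_antisymm (hst.trans ht.symm.le) hs
    rw [this, ← ht]
  · have hθ : 0 ≤ s / t := div_nonneg hs ht.le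
    have hθ1 : s / t ≤ 1 := (div_le_one ht).mpr hst
    have key : G (s • x) ≤ (s / t) * G (t • x) + (1 - s / t) * G 0 := by
      have := hconv.2 (Set.mem_univ (t • x)) (Set.mem_univ (0 : E))
        hθ (show (0:ℝ) ≤ 1 - s / t by linarith) (by ring)
      have hx : (s / t) • t • x + (1 - s / t) • (0 : E) = s • x := by
        rw [smul_zero, add_zero, smul_smul, div_mul_cancel₀ _ (ne_of_gt ht)]
      rw [hx] at this
      simpa [smul_eq_mul] using this
    rw [h0] at key
    nlinarith [hpos (t • x), key]

lemma aux_scale_le {G : E → ℝ} (hconv : ConvexOn ℝ Set.univ G) (h0 : G 0 = 0)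
    (x : E) {θ : ℝ} (h1 : 0 ≤ θ) (h2 : θ ≤ 1) : G (θ • x) ≤ θ * G x := by
  have := hconv.2 (Set.mem_univ x) (Set.mem_univ (0 : E))
    h1 (show (0:ℝ) ≤ 1 - θ by linarith) (by ring)
  have hx : θ • x + (1 - θ) • (0 : E) = θ • x := by rw [smul_zero, add_zero]
  rw [hx] at this
  simpa [h0, smul_eq_mul] using this

lemma aux_Gpos {G : E → ℝ} (h0 : G 0 = 0)
    (hpos : ∀ x, 0 ≤ G x)
    (hcoer : Filter.Tendsto (fun x => G x / ‖x‖) (Filter.cocompact E) Filter.atTop)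
    {K₁ : ℝ} (hK : ∀ x, G ((2:ℝ) • x) ≤ K₁ * G x)
    {x : E} (hx : x ≠ 0) : 0 < G x := by
  rcases (hpos x).lt_or_eq with h | h
  · exact h
  exfalso
  have hzero : ∀ n : ℕ, G (((2:ℝ) ^ n) • x) = 0 := by
    intro n
    induction n with
    | zero => simpa using h.symm
    | succ n ih =>
      have : ((2:ℝ) ^ (n+1)) • x = (2:ℝ) • (((2:ℝ) ^ n) • x) := by
        rw [smul_smul]; ring_nf
      rw [this]
      have := hK (((2:ℝ) ^ n) • x)
      rw [ih, mul_zero] at this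
      exact le_antisymm this (hpos _)
  have h1 : ∀ᶠ z in Filter.cocompact E, (1:ℝ) ≤ G z / ‖z‖ := hcoer.eventually_ge_atTop 1
  rw [Filter.eventually_iff, Filter.mem_cocompact] at h1
  obtain ⟨K, hKc, hKs⟩ := h1
  obtain ⟨R, hR⟩ := hKc.isBounded.subset_closedBall 0
  have hxn : 0 < ‖x‖ := norm_pos_iff.mpr hx
  obtain ⟨n, hn⟩ := pow_unbounded_of_one_lt (R / ‖x‖) (one_lt_two (α := ℝ))
  have hz : (((2:ℝ) ^ n) • x) ∉ K := by
    intro hmem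
    have hle := hR hmem
    rw [Metric.mem_closedBall, dist_zero_right, norm_smul] at hle
    have h2 : ‖(2:ℝ) ^ n‖ = (2:ℝ) ^ n := by
      rw [Real.norm_eq_abs, abs_of_pos (by positivity)]
    rw [h2] at hle
    rw [div_lt_iff₀ hxn] at hn
    linarith
  have := hKs hz
  simp only [Set.mem_setOf_eq, hzero n] at this
  have hnorm : 0 < ‖((2:ℝ) ^ n) • x‖ :=
    norm_pos_iff.mpr (smul_ne_zero (by positivity) hx)
  rw [zero_div] at this
  linarith

lemma aux_dom {G : E → ℝ} (hconv : ConvexOn ℝ Set.univ G) (h0 : G 0 = 0)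
    (hpos : ∀ x, 0 ≤ G x) {K₁ : ℝ} (hK2 : 2 < K₁) (hK : ∀ x, G ((2:ℝ) • x) ≤ K₁ * G x)
    (c : ℝ) (hc : 0 ≤ c) : ∃ C : ℝ, 0 ≤ C ∧ ∀ x, G (c • x) ≤ C * G x := by
  obtain ⟨n, hn⟩ := pow_unbounded_of_one_lt c (one_lt_two (α := ℝ))
  refine ⟨K₁ ^ n, by positivity, fun x => ?_⟩
  have h1 : G (c • x) ≤ G (((2:ℝ) ^ n) • x) := aux_ray_mono hconv h0 hpos x hc hn.le
  have h2 : ∀ m : ℕ, G (((2:ℝ) ^ m) • x) ≤ K₁ ^ m * G x := by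
    intro m
    induction m with
    | zero => simpa using le_refl (G x)
    | succ m ih =>
      have he : ((2:ℝ) ^ (m+1)) • x = (2:ℝ) • (((2:ℝ) ^ m) • x) := by
        rw [smul_smul]; ring_nf
      rw [he]
      calc G ((2:ℝ) • (((2:ℝ) ^ m) • x)) ≤ K₁ * G (((2:ℝ) ^ m) • x) := hK _
        _ ≤ K₁ * (K₁ ^ m * G x) := by
            have : (0:ℝ) < K₁ := by linarith
            nlinarith [ih, this]
        _ = K₁ ^ (m+1) * G x := by ring
  exact h1.trans (h2 n)

end AuxLemmas

section AuxLemmas2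

variable {N : ℕ}
local notation "E" => EuclideanSpace ℝ (Fin N)

lemma aux_ratio_mem {G : E → ℝ} (hG1 : ContDiff ℝ 1 G) (hconv : ConvexOn ℝ Set.univ G)
    (h0 : G 0 = 0) (hGpos : ∀ x : E, x ≠ 0 → 0 < G x)
    {K₁ : ℝ} (hK : ∀ x, G ((2:ℝ) • x) ≤ K₁ * G x) {r : ℝ}
    (hr : r ∈ {r : ℝ | ∃ x : E, x ≠ 0 ∧ r = ⟪x, gradient G x⟫ / G x}) :
    1 ≤ r ∧ r ≤ K₁ - 1 := by
  obtain ⟨x, hx, rfl⟩ := hr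
  have hGx := hGpos x hx
  have hlow := aux_firstOrder hG1 hconv x 0
  rw [h0, zero_sub, inner_neg_right] at hlow
  have hup := aux_firstOrder hG1 hconv x ((2:ℝ) • x)
  have h2x : (2:ℝ) • x - x = x := by
    rw [two_smul]; abel
  rw [h2x] at hup
  have hup2 : G x + ⟪gradient G x, x⟫ ≤ K₁ * G x := hup.trans (hK x)
  have hcomm : ⟪x, gradient G x⟫ = ⟪gradient G x, x⟫ := real_inner_comm _ _
  constructor
  · rw [le_div_iff₀ hGx, one_mul, hcomm]; linarith
  · rw [div_le_iff₀ hGx, hcomm]; linarith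

lemma aux_q_ub {G : E → ℝ} (hG1 : ContDiff ℝ 1 G) (hconv : ConvexOn ℝ Set.univ G)
    (h0 : G 0 = 0) (hGpos : ∀ x : E, x ≠ 0 → 0 < G x)
    {K₁ : ℝ} (hK : ∀ x, G ((2:ℝ) • x) ≤ K₁ * G x)
    {x : E} (hx : x ≠ 0) : ⟪x, gradient G x⟫ ≤ simonQ G * G x := by
  have hbdd : BddAbove {r : ℝ | ∃ x : E, x ≠ 0 ∧ r = ⟪x, gradient G x⟫ / G x} :=
    ⟨K₁ - 1, fun _ hr => (aux_ratio_mem hG1 hconv h0 hGpos hK hr).2⟩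
  have := le_csSup hbdd (⟨x, hx, rfl⟩ :
    ⟪x, gradient G x⟫ / G x ∈ {r : ℝ | ∃ x : E, x ≠ 0 ∧ r = ⟪x, gradient G x⟫ / G x})
  rw [div_le_iff₀ (hGpos x hx)] at this
  exact this

lemma aux_p_lb {G : E → ℝ} (hG1 : ContDiff ℝ 1 G) (hconv : ConvexOn ℝ Set.univ G)
    (h0 : G 0 = 0) (hGpos : ∀ x : E, x ≠ 0 → 0 < G x)
    {K₁ : ℝ} (hK : ∀ x, G ((2:ℝ) • x) ≤ K₁ * G x)
    {x : E} (hx : x ≠ 0) : simonP G * G x ≤ ⟪x, gradient G x⟫ := by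
  have hbdd : BddBelow {r : ℝ | ∃ x : E, x ≠ 0 ∧ r = ⟪x, gradient G x⟫ / G x} :=
    ⟨1, fun _ hr => (aux_ratio_mem hG1 hconv h0 hGpos hK hr).1⟩
  have := csInf_le hbdd (⟨x, hx, rfl⟩ :
    ⟪x, gradient G x⟫ / G x ∈ {r : ℝ | ∃ x : E, x ≠ 0 ∧ r = ⟪x, gradient G x⟫ / G x})
  rw [le_div_iff₀ (hGpos x hx)] at this
  exact this

lemma aux_one_le_p {G : E → ℝ} (hG1 : ContDiff ℝ 1 G) (hconv : ConvexOn ℝ Set.univ G)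
    (h0 : G 0 = 0) (hGpos : ∀ x : E, x ≠ 0 → 0 < G x)
    {K₁ : ℝ} (hK : ∀ x, G ((2:ℝ) • x) ≤ K₁ * G x)
    {x₀ : E} (hx₀ : x₀ ≠ 0) : 1 ≤ simonP G :=
  le_csInf ⟨_, ⟨x₀, hx₀, rfl⟩⟩ fun _ hr => (aux_ratio_mem hG1 hconv h0 hGpos hK hr).1

lemma aux_one_le_q {G : E → ℝ} (hG1 : ContDiff ℝ 1 G) (hconv : ConvexOn ℝ Set.univ G)
    (h0 : G 0 = 0) (hGpos : ∀ x : E, x ≠ 0 → 0 < G x)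
    {K₁ : ℝ} (hK : ∀ x, G ((2:ℝ) • x) ≤ K₁ * G x)
    {x₀ : E} (hx₀ : x₀ ≠ 0) : 1 ≤ simonQ G := by
  have hbdd : BddAbove {r : ℝ | ∃ x : E, x ≠ 0 ∧ r = ⟪x, gradient G x⟫ / G x} :=
    ⟨K₁ - 1, fun _ hr => (aux_ratio_mem hG1 hconv h0 hGpos hK hr).2⟩
  have h1 := le_csSup hbdd (⟨x₀, hx₀, rfl⟩ :
    ⟪x₀, gradient G x₀⟫ / G x₀ ∈ {r : ℝ | ∃ x : E, x ≠ 0 ∧ r = ⟪x, gradient G x⟫ / G x})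
  have h2 := (aux_ratio_mem hG1 hconv h0 hGpos hK (⟨x₀, hx₀, rfl⟩ :
    ⟪x₀, gradient G x₀⟫ / G x₀ ∈ {r : ℝ | ∃ x : E, x ≠ 0 ∧ r = ⟪x, gradient G x⟫ / G x})).1
  exact h2.trans h1

lemma aux_hasDerivAt0 {G : E → ℝ} (hG : ContDiff ℝ 1 G) (x : E) (t : ℝ) :
    HasDerivAt (fun s : ℝ => G (s • x)) ⟪x, gradient G (t • x)⟫ t := by
  simpa using aux_hasDerivAt hG 0 x t

lemma aux_scale_q {G : E → ℝ} (hG1 : ContDiff ℝ 1 G) (hconv : ConvexOn ℝ Set.univ G)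
    (h0 : G 0 = 0) (hGpos : ∀ x : E, x ≠ 0 → 0 < G x)
    {K₁ : ℝ} (hK : ∀ x, G ((2:ℝ) • x) ≤ K₁ * G x)
    (x : E) {l : ℝ} (hl : 0 < l) (hl1 : l ≤ 1) :
    l ^ simonQ G * G x ≤ G (l • x) := by
  by_cases hx : x = 0
  · simp [hx, h0, smul_zero]
  set q := simonQ G with hq
  set h : ℝ → ℝ := fun μ => G (μ • x) * μ ^ (-q) with hh
  have hder : ∀ μ : ℝ, 0 < μ → HasDerivAt h
      (⟪x, gradient G (μ • x)⟫ * μ ^ (-q) + G (μ • x) * (-q * μ ^ (-q - 1))) μ := by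
    intro μ hμ
    exact (aux_hasDerivAt0 hG1 x μ).mul (Real.hasDerivAt_rpow_const (Or.inl hμ.ne'))
  have hanti : AntitoneOn h (Set.Icc l 1) := by
    refine antitoneOn_of_deriv_nonpos (convex_Icc l 1) ?_ ?_ ?_
    · intro μ hμ
      exact ((hder μ (lt_of_lt_of_le hl hμ.1)).continuousAt).continuousWithinAt
    · intro μ hμ
      rw [interior_Icc] at hμ
      exact ((hder μ (hl.trans hμ.1)).differentiableAt).differentiableWithinAt
    · intro μ hμ
      rw [interior_Icc] at hμ
      have hμpos : 0 < μ := hl.trans hμ.1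
      rw [(hder μ hμpos).deriv]
      have hμx : μ • x ≠ 0 := smul_ne_zero hμpos.ne' hx
      have hub := aux_q_ub hG1 hconv h0 hGpos hK hμx
      rw [real_inner_smul_left] at hub
      have hrpow : μ ^ (-q) = μ * μ ^ (-q - 1) := by
        have h1 : μ ^ (-q) = μ ^ ((-q - 1) + 1) := by congr 1; ring
        rw [h1, Real.rpow_add_one hμpos.ne', mul_comm]
      have heq : ⟪x, gradient G (μ • x)⟫ * μ ^ (-q) + G (μ • x) * (-q * μ ^ (-q - 1))
          = μ ^ (-q - 1) * (μ * ⟪x, gradient G (μ • x)⟫ - q * G (μ • x)) := by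
        rw [hrpow]; ring
      rw [heq]
      have hpos : (0:ℝ) < μ ^ (-q - 1) := Real.rpow_pos_of_pos hμpos _
      nlinarith [hub, hpos]
  have key : h 1 ≤ h l := hanti ⟨le_rfl, hl1⟩ ⟨hl1, le_rfl⟩ hl1
  have h1 : h 1 = G x := by
    simp [hh, Real.one_rpow]
  rw [h1] at key
  calc l ^ q * G x ≤ l ^ q * (G (l • x) * l ^ (-q)) :=
        mul_le_mul_of_nonneg_left key (Real.rpow_nonneg hl.le q)
    _ = G (l • x) := by
        rw [mul_comm (G (l • x)) _, ← mul_assoc, ← Real.rpow_add hl]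
        simp

lemma aux_scale_p {G : E → ℝ} (hG1 : ContDiff ℝ 1 G) (hconv : ConvexOn ℝ Set.univ G)
    (h0 : G 0 = 0) (hGpos : ∀ x : E, x ≠ 0 → 0 < G x)
    {K₁ : ℝ} (hK : ∀ x, G ((2:ℝ) • x) ≤ K₁ * G x)
    (x : E) {l : ℝ} (hl1 : 1 ≤ l) :
    l ^ simonP G * G x ≤ G (l • x) := by
  have hl : (0:ℝ) < l := lt_of_lt_of_le one_pos hl1
  by_cases hx : x = 0
  · simp [hx, h0, smul_zero]
  set p := simonP G with hp
  set h : ℝ → ℝ := fun μ => G (μ • x) * μ ^ (-p) with hh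
  have hder : ∀ μ : ℝ, 0 < μ → HasDerivAt h
      (⟪x, gradient G (μ • x)⟫ * μ ^ (-p) + G (μ • x) * (-p * μ ^ (-p - 1))) μ := by
    intro μ hμ
    exact (aux_hasDerivAt0 hG1 x μ).mul (Real.hasDerivAt_rpow_const (Or.inl hμ.ne'))
  have hmono : MonotoneOn h (Set.Icc 1 l) := by
    refine monotoneOn_of_deriv_nonneg (convex_Icc 1 l) ?_ ?_ ?_
    · intro μ hμ
      exact ((hder μ (lt_of_lt_of_le one_pos hμ.1)).continuousAt).continuousWithinAt
    · intro μ hμ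
      rw [interior_Icc] at hμ
      exact ((hder μ (lt_trans one_pos hμ.1)).differentiableAt).differentiableWithinAt
    · intro μ hμ
      rw [interior_Icc] at hμ
      have hμpos : 0 < μ := lt_trans one_pos hμ.1
      rw [(hder μ hμpos).deriv]
      have hμx : μ • x ≠ 0 := smul_ne_zero hμpos.ne' hx
      have hlb := aux_p_lb hG1 hconv h0 hGpos hK hμx
      rw [real_inner_smul_left] at hlb
      have hrpow : μ ^ (-p) = μ * μ ^ (-p - 1) := by
        have h1 : μ ^ (-p) = μ ^ ((-p - 1) + 1) := by congr 1; ring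
        rw [h1, Real.rpow_add_one hμpos.ne', mul_comm]
      have heq : ⟪x, gradient G (μ • x)⟫ * μ ^ (-p) + G (μ • x) * (-p * μ ^ (-p - 1))
          = μ ^ (-p - 1) * (μ * ⟪x, gradient G (μ • x)⟫ - p * G (μ • x)) := by
        rw [hrpow]; ring
      rw [heq]
      have hpos : (0:ℝ) < μ ^ (-p - 1) := Real.rpow_pos_of_pos hμpos _
      nlinarith [hlb, hpos]
  have key : h 1 ≤ h l := hmono ⟨le_rfl, hl1⟩ ⟨hl1, le_rfl⟩ hl1
  have h1 : h 1 = G x := by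
    simp [hh, Real.one_rpow]
  rw [h1] at key
  calc l ^ p * G x ≤ l ^ p * (G (l • x) * l ^ (-p)) :=
        mul_le_mul_of_nonneg_left key (Real.rpow_nonneg hl.le p)
    _ = G (l • x) := by
        rw [mul_comm (G (l • x)) _, ← mul_assoc, ← Real.rpow_add hl]
        simp

lemma aux_intInt_eq {a b : ℝ} (hle : a ≤ b) (g : ℝ → ℝ) :
    ∫ t in a..b, g t = ∫ t in Set.Icc a b, g t :=
  (intervalIntegral.integral_of_le hle).trans (MeasureTheory.integral_Icc_eq_integral_Ioc).symm

-- integrability of scaled compositions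

lemma aux_int_smul {T : ℝ} {G : E → ℝ} (hGc : Continuous G)
    (hconv : ConvexOn ℝ Set.univ G) (h0 : G 0 = 0) (hpos : ∀ x, 0 ≤ G x)
    {K₁ : ℝ} (hK2 : 2 < K₁) (hK : ∀ x, G ((2:ℝ) • x) ≤ K₁ * G x)
    {v : ℝ → E} (hvm : AEStronglyMeasurable v (volume.restrict (Set.Icc (-T) T)))
    (hvint : IntegrableOn (fun t => G (v t)) (Set.Icc (-T) T))
    (c : ℝ) (hc : 0 ≤ c) :
    IntegrableOn (fun t => G (c • v t)) (Set.Icc (-T) T) := by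
  obtain ⟨C, hC0, hC⟩ := aux_dom hconv h0 hpos hK2 hK c hc
  have hmeas : AEStronglyMeasurable (fun t => G (c • v t))
      (volume.restrict (Set.Icc (-T) T)) :=
    hGc.comp_aestronglyMeasurable (hvm.const_smul c)
  refine Integrable.mono' (hvint.const_mul C) hmeas ?_
  filter_upwards with t
  rw [Real.norm_eq_abs, abs_of_nonneg (hpos _)]
  exact hC (v t)

lemma aux_modular_ge {T : ℝ} (hT : 0 < T) {G : E → ℝ} (hG1 : ContDiff ℝ 1 G)
    (hconv : ConvexOn ℝ Set.univ G) (h0 : G 0 = 0) (hpos : ∀ x, 0 ≤ G x)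
    (hGpos : ∀ x : E, x ≠ 0 → 0 < G x)
    {K₁ : ℝ} (hK2 : 2 < K₁) (hK : ∀ x, G ((2:ℝ) • x) ≤ K₁ * G x)
    {v : ℝ → E} (hvm : AEStronglyMeasurable v (volume.restrict (Set.Icc (-T) T)))
    (hvint : IntegrableOn (fun t => G (v t)) (Set.Icc (-T) T))
    (hs : 0 < luxNorm T G v) :
    (luxNorm T G v ≤ 1 → luxNorm T G v ^ simonQ G ≤ ∫ t in Set.Icc (-T) T, G (v t)) ∧
    (1 ≤ luxNorm T G v → luxNorm T G v ^ simonP G ≤ ∫ t in Set.Icc (-T) T, G (v t)) := by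
  have hGc : Continuous G := hG1.continuous
  have hTle : (-T) ≤ T := by linarith
  set s := luxNorm T G v with hsdef
  set S := {l : ℝ | 0 < l ∧ ∫ t in (-T)..T, G (l⁻¹ • v t) ≤ 1} with hS
  have hbdd : BddBelow S := ⟨0, fun l hl => hl.1.le⟩
  -- l < s are not in S
  have hgt : ∀ l : ℝ, 0 < l → l < s → 1 < ∫ t in Set.Icc (-T) T, G (l⁻¹ • v t) := by
    intro l hl hls
    by_contra hcon
    push_neg at hcon
    have hmem : l ∈ S := ⟨hl, by rw [aux_intInt_eq hTle]; exact hcon⟩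
    exact absurd (csInf_le hbdd hmem) (not_le.mpr hls)
  -- Claim A : modular at s⁻¹ is ≥ 1
  have claimA : 1 ≤ ∫ t in Set.Icc (-T) T, G (s⁻¹ • v t) := by
    set c : ℕ → ℝ := fun n => s - s / (n + 2) with hc
    have hn2 : ∀ n : ℕ, (1:ℝ) < (n:ℝ) + 2 := by
      intro n; have := Nat.cast_nonneg (α := ℝ) n; linarith
    have hcpos : ∀ n, 0 < c n := by
      intro n
      have h1 : s / ((n:ℝ) + 2) < s := div_lt_self hs (hn2 n)
      simp only [hc]; linarith
    have hclt : ∀ n, c n < s := by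
      intro n
      have : 0 < s / ((n:ℝ) + 2) := by positivity
      simp only [hc]; linarith
    have hcge : ∀ n, s / 2 ≤ c n := by
      intro n
      have h2 : s / ((n:ℝ) + 2) ≤ s / 2 := by
        apply div_le_div_of_nonneg_left hs.le (by norm_num)
        have := Nat.cast_nonneg (α := ℝ) n; linarith
      simp only [hc]; linarith
    have hcinv : ∀ n, (c n)⁻¹ ≤ 2 / s := by
      intro n
      have := inv_anti₀ (by positivity : (0:ℝ) < s / 2) (hcge n)
      simpa [inv_div] using this
    -- the dominating function
    obtain ⟨C, hC0, hC⟩ := aux_dom hconv h0 hpos hK2 hK (2 / s) (by positivity)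
    have hdomint : Integrable (fun t => C * G (v t))
        (volume.restrict (Set.Icc (-T) T)) := hvint.const_mul C
    have hmeas : ∀ n : ℕ, AEStronglyMeasurable (fun t => G ((c n)⁻¹ • v t))
        (volume.restrict (Set.Icc (-T) T)) := fun n =>
      hGc.comp_aestronglyMeasurable (by exact hvm.const_smul ((c n)⁻¹))
    have hbound : ∀ n : ℕ, ∀ᵐ t ∂(volume.restrict (Set.Icc (-T) T)),
        ‖G ((c n)⁻¹ • v t)‖ ≤ C * G (v t) := by
      intro n
      filter_upwards with t
      rw [Real.norm_eq_abs, abs_of_nonneg (hpos _)]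
      calc G ((c n)⁻¹ • v t) ≤ G ((2 / s) • v t) :=
            aux_ray_mono hconv h0 hpos (v t) (inv_nonneg.mpr (hcpos n).le) (hcinv n)
        _ ≤ C * G (v t) := hC (v t)
    have hlim : ∀ᵐ t ∂(volume.restrict (Set.Icc (-T) T)),
        Filter.Tendsto (fun n : ℕ => G ((c n)⁻¹ • v t)) Filter.atTop
          (nhds (G (s⁻¹ • v t))) := by
      filter_upwards with t
      have hc0 : Filter.Tendsto (fun n : ℕ => s / ((n:ℝ) + 2)) Filter.atTop (nhds 0) := by
        have h1 : Filter.Tendsto (fun n : ℕ => ((n:ℝ) + 2)) Filter.atTop Filter.atTop :=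
          Filter.tendsto_atTop_add_const_right _ 2 tendsto_natCast_atTop_atTop
        simpa using Filter.Tendsto.div_atTop tendsto_const_nhds h1
      have hcs : Filter.Tendsto c Filter.atTop (nhds s) := by
        have := Filter.Tendsto.sub (tendsto_const_nhds (x := s) (f := Filter.atTop)) hc0
        simpa [hc] using this
      have hinv : Filter.Tendsto (fun n => (c n)⁻¹) Filter.atTop (nhds s⁻¹) :=
        hcs.inv₀ hs.ne'
      have hsmul : Filter.Tendsto (fun n => (c n)⁻¹ • v t) Filter.atTop
          (nhds (s⁻¹ • v t)) := hinv.smul_const (v t)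
      exact (hGc.tendsto _).comp hsmul
    have hDCT := MeasureTheory.tendsto_integral_of_dominated_convergence
      (F := fun n t => G ((c n)⁻¹ • v t)) (f := fun t => G (s⁻¹ • v t))
      (bound := fun t => C * G (v t)) hmeas hdomint hbound hlim
    refine ge_of_tendsto hDCT ?_
    filter_upwards with n
    exact (hgt (c n) (hcpos n) (hclt n)).le
  -- conclude
  have hint_s : IntegrableOn (fun t => G (s⁻¹ • v t)) (Set.Icc (-T) T) :=
    aux_int_smul hGc hconv h0 hpos hK2 hK hvm hvint s⁻¹ (by positivity)
  constructor
  · intro hs1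
    have hptwise : ∀ t : ℝ, s ^ simonQ G * G (s⁻¹ • v t) ≤ G (v t) := by
      intro t
      have := aux_scale_q hG1 hconv h0 hGpos hK (s⁻¹ • v t) hs hs1
      rwa [smul_smul, mul_inv_cancel₀ hs.ne', one_smul] at this
    have hmono : ∫ t in Set.Icc (-T) T, s ^ simonQ G * G (s⁻¹ • v t)
        ≤ ∫ t in Set.Icc (-T) T, G (v t) :=
      MeasureTheory.integral_mono (hint_s.const_mul _) hvint hptwise
    rw [MeasureTheory.integral_const_mul] at hmono
    calc s ^ simonQ G = s ^ simonQ G * 1 := (mul_one _).symm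
      _ ≤ s ^ simonQ G * ∫ t in Set.Icc (-T) T, G (s⁻¹ • v t) :=
          mul_le_mul_of_nonneg_left claimA (Real.rpow_nonneg hs.le _)
      _ ≤ ∫ t in Set.Icc (-T) T, G (v t) := hmono
  · intro hs1
    have hptwise : ∀ t : ℝ, s ^ simonP G * G (s⁻¹ • v t) ≤ G (v t) := by
      intro t
      have := aux_scale_p hG1 hconv h0 hGpos hK (s⁻¹ • v t) hs1
      rwa [smul_smul, mul_inv_cancel₀ hs.ne', one_smul] at this
    have hmono : ∫ t in Set.Icc (-T) T, s ^ simonP G * G (s⁻¹ • v t)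
        ≤ ∫ t in Set.Icc (-T) T, G (v t) :=
      MeasureTheory.integral_mono (hint_s.const_mul _) hvint hptwise
    rw [MeasureTheory.integral_const_mul] at hmono
    calc s ^ simonP G = s ^ simonP G * 1 := (mul_one _).symm
      _ ≤ s ^ simonP G * ∫ t in Set.Icc (-T) T, G (s⁻¹ • v t) :=
          mul_le_mul_of_nonneg_left claimA (Real.rpow_nonneg hs.le _)
      _ ≤ ∫ t in Set.Icc (-T) T, G (v t) := hmono

lemma aux_fen_bdd {G : E → ℝ} (hpos : ∀ x, 0 ≤ G x)
    (hcoer : Filter.Tendsto (fun x => G x / ‖x‖) (Filter.cocompact E) Filter.atTop)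
    (y : E) : BddAbove {r : ℝ | ∃ x : E, r = ⟪x, y⟫ - G x} := by
  have h1 : ∀ᶠ z in Filter.cocompact E, ‖y‖ ≤ G z / ‖z‖ := hcoer.eventually_ge_atTop ‖y‖
  rw [Filter.eventually_iff, Filter.mem_cocompact] at h1
  obtain ⟨K, hKc, hKs⟩ := h1
  obtain ⟨R, hR⟩ := hKc.isBounded.subset_closedBall 0
  refine ⟨max 0 (R * ‖y‖), fun r hr => ?_⟩
  obtain ⟨x, rfl⟩ := hr
  by_cases hx : x ∈ K
  · have hxR : ‖x‖ ≤ R := by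
      have := hR hx
      rwa [Metric.mem_closedBall, dist_zero_right] at this
    have : ⟪x, y⟫ - G x ≤ ‖x‖ * ‖y‖ := by
      have h2 := real_inner_le_norm x y
      have := hpos x
      linarith
    refine this.trans (le_max_of_le_right ?_)
    exact mul_le_mul_of_nonneg_right hxR (norm_nonneg _)
  · have h3 : ‖y‖ ≤ G x / ‖x‖ := hKs hx
    rcases eq_or_ne x 0 with rfl | hx0
    · have h4 : ⟪(0 : E), y⟫ - G 0 ≤ 0 := by
        simp [hpos 0]
      exact h4.trans (le_max_left _ _)
    · have hxn : 0 < ‖x‖ := norm_pos_iff.mpr hx0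
      rw [le_div_iff₀ hxn] at h3
      have h2 := real_inner_le_norm x y
      have : ⟪x, y⟫ - G x ≤ 0 := by nlinarith
      exact this.trans (le_max_left _ _)

lemma aux_fenchelYoung {G : E → ℝ} (hpos : ∀ x, 0 ≤ G x)
    (hcoer : Filter.Tendsto (fun x => G x / ‖x‖) (Filter.cocompact E) Filter.atTop)
    (y x : E) : ⟪x, y⟫ - G x ≤ fenchel G y :=
  le_csSup (aux_fen_bdd hpos hcoer y) ⟨x, rfl⟩

lemma aux_fen_nonneg {G : E → ℝ} (h0 : G 0 = 0) (hpos : ∀ x, 0 ≤ G x)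
    (hcoer : Filter.Tendsto (fun x => G x / ‖x‖) (Filter.cocompact E) Filter.atTop)
    (y : E) : 0 ≤ fenchel G y := by
  have := aux_fenchelYoung hpos hcoer y 0
  simpa [h0] using this

end AuxLemmas2

/-- Lemma 3.3 of the paper (case of Theorem 1.1): the action functional is
bounded below by a positive constant on the sphere of radius ρ. -/
theorem mountain_pass_geometry_global {N : ℕ} (T : ℝ) (hT : 0 < T)
    (G : EuclideanSpace ℝ (Fin N) → ℝ) (hG : IsGFun G)
    (hDel2 : Delta2Global G) (hNab2 : Nabla2Global G)
    (V : ℝ → EuclideanSpace ℝ (Fin N) → ℝ)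
    (hVc : ContinuousOn (fun p : ℝ × EuclideanSpace ℝ (Fin N) => V p.1 p.2)
      (Set.Icc (-T) T ×ˢ Set.univ))
    (a : ℝ → ℝ) (ha : IntegrableOn a (Set.Icc (-T) T)) (b : ℝ) (hb : 1 < b)
    (ρ₀ : ℝ) (hρ₀ : 0 < ρ₀)
    (hA3 : ∀ t ∈ Set.Icc (-T) T, ∀ x : EuclideanSpace ℝ (Fin N),
      ‖x‖ ≤ ρ₀ → b * G x - a t ≤ V t x)
    (f : ℝ → EuclideanSpace ℝ (Fin N))
    (hfm : AEStronglyMeasurable f (volume.restrict (Set.Icc (-T) T)))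
    (hf : IntegrableOn (fun t => fenchel G (f t)) (Set.Icc (-T) T))
    (Cinf : ℝ) (hCinf : 0 < Cinf)
    (hemb : ∀ u u' : ℝ → EuclideanSpace ℝ (Fin N), MemW T G u u' →
      ∀ t ∈ Set.Icc (-T) T, ‖u t‖ ≤ Cinf * WNorm T G u u')
    (ρ : ℝ) (hρ : ρ = ρ₀ / Cinf)
    (hsmall₁ : ρ ≤ 2 →
      (∫ t in (-T)..T, fenchel G (f t)) + ∫ t in (-T)..T, a t
        < min 1 (b - 1) * (ρ / 2) ^ simonQ G)
    (hsmall₂ : 2 < ρ →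
      (∫ t in (-T)..T, fenchel G (f t)) + ∫ t in (-T)..T, a t
        < min 1 (b - 1) * (ρ / 2) ^ simonP G) :
    ∃ α > (0 : ℝ), ∀ u u' : ℝ → EuclideanSpace ℝ (Fin N), MemW T G u u' →
      WNorm T G u u' = ρ →
      α ≤ ∫ t in (-T)..T, (G (u' t) + V t (u t) + ⟪f t, u t⟫) := by
  obtain ⟨hG1, hconv, heven, h0, hpos, hcoer⟩ := hG
  obtain ⟨K₁, hK2, hK⟩ := hDel2
  have hTle : (-T) ≤ T := by linarith
  have hρPos : 0 < ρ := by rw [hρ]; positivity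
  rcases Nat.eq_zero_or_pos N with hN | hN
  · -- degenerate case N = 0 : no function has norm ρ > 0
    subst hN
    refine ⟨1, one_pos, fun u u' hW hnorm => ?_⟩
    exfalso
    have hlux : ∀ w : ℝ → EuclideanSpace ℝ (Fin 0), luxNorm T G w = 0 := by
      intro w
      have hset : {l : ℝ | 0 < l ∧ ∫ t in (-T)..T, G (l⁻¹ • w t) ≤ 1} = Set.Ioi 0 := by
        ext l
        simp only [Set.mem_setOf_eq, Set.mem_Ioi]
        constructor
        · exact fun h => h.1
        · intro hl
          refine ⟨hl, ?_⟩
          have hz : ∀ t : ℝ, G (l⁻¹ • w t) = 0 := by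
            intro t
            have hzz : l⁻¹ • w t = (0 : EuclideanSpace ℝ (Fin 0)) :=
              by ext i; exact Fin.elim0 i
            rw [hzz, h0]
          simp only [hz, intervalIntegral.integral_zero]
          norm_num
      rw [luxNorm, hset, csInf_Ioi]
    have h1 : WNorm T G u u' = 0 := by
      rw [WNorm, hlux, hlux, add_zero]
    rw [hnorm] at h1
    linarith
  · -- main case N ≥ 1
    have hx₀ : (EuclideanSpace.single (⟨0, hN⟩ : Fin N) (1:ℝ)) ≠ 0 := by
      apply norm_ne_zero_iff.mp
      rw [EuclideanSpace.norm_single]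
      norm_num
    have hGpos : ∀ x : EuclideanSpace ℝ (Fin N), x ≠ 0 → 0 < G x :=
      fun x hx => aux_Gpos h0 hpos hcoer hK hx
    have hq1 : 1 ≤ simonQ G := aux_one_le_q hG1 hconv h0 hGpos hK hx₀
    have hp1 : 1 ≤ simonP G := aux_one_le_p hG1 hconv h0 hGpos hK hx₀
    have hm0 : 0 < min 1 (b - 1) := lt_min one_pos (by linarith)
    have hm1 : min 1 (b - 1) ≤ 1 := min_le_left _ _
    have hmb : min 1 (b - 1) ≤ b - 1 := min_le_right _ _
    have key : ∃ e : ℝ,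
        ((∫ t in (-T)..T, fenchel G (f t)) + ∫ t in (-T)..T, a t
          < min 1 (b - 1) * (ρ/2) ^ e) ∧
        ∀ v : ℝ → EuclideanSpace ℝ (Fin N),
          AEStronglyMeasurable v (volume.restrict (Set.Icc (-T) T)) →
          IntegrableOn (fun t => G (v t)) (Set.Icc (-T) T) →
          ρ/2 ≤ luxNorm T G v → (ρ/2) ^ e ≤ ∫ t in Set.Icc (-T) T, G (v t) := by
      rcases le_or_gt ρ 2 with hρ2 | hρ2
      · refine ⟨simonQ G, hsmall₁ hρ2, fun v hvm hvint hv => ?_⟩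
        have hs : 0 < luxNorm T G v := lt_of_lt_of_le (by linarith) hv
        have hmge := aux_modular_ge hT hG1 hconv h0 hpos hGpos hK2 hK hvm hvint hs
        rcases le_or_gt (luxNorm T G v) 1 with h1 | h1
        · calc (ρ/2) ^ simonQ G ≤ (luxNorm T G v) ^ simonQ G :=
              Real.rpow_le_rpow (by linarith) hv (by linarith)
            _ ≤ _ := hmge.1 h1
        · calc (ρ/2) ^ simonQ G ≤ 1 :=
              Real.rpow_le_one (by linarith) (by linarith) (by linarith)
            _ = 1 ^ simonP G := (Real.one_rpow _).symm
            _ ≤ (luxNorm T G v) ^ simonP G :=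
              Real.rpow_le_rpow zero_le_one h1.le (by linarith)
            _ ≤ _ := hmge.2 h1.le
      · refine ⟨simonP G, hsmall₂ hρ2, fun v hvm hvint hv => ?_⟩
        have hs : 0 < luxNorm T G v := lt_of_lt_of_le (by linarith) hv
        have hmge := aux_modular_ge hT hG1 hconv h0 hpos hGpos hK2 hK hvm hvint hs
        have h1 : 1 ≤ luxNorm T G v := le_trans (by linarith) hv
        calc (ρ/2) ^ simonP G ≤ (luxNorm T G v) ^ simonP G :=
            Real.rpow_le_rpow (by linarith) hv (by linarith)
          _ ≤ _ := hmge.2 h1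
    obtain ⟨e, hsm, hkey⟩ := key
    refine ⟨min 1 (b - 1) * (ρ/2) ^ e
        - ((∫ t in (-T)..T, fenchel G (f t)) + ∫ t in (-T)..T, a t),
      by linarith, fun u u' hW hnorm => ?_⟩
    have hac := hW.1
    have hu'int := hW.2.1
    have hum := hW.2.2.1.1
    have huG := hW.2.2.1.2
    have hu'm := hW.2.2.2.1.1
    have hu'G := hW.2.2.2.1.2
    -- continuity of u on [-T,T]
    have hu'ii : IntervalIntegrable u' volume (-T) T := by
      rw [intervalIntegrable_iff_integrableOn_Ioc_of_le hTle]
      exact hu'int.mono_set Set.Ioc_subset_Icc_self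
    have hprim : ContinuousOn (fun t => (u (-T) + ∫ s in (-T)..t, u' s))
        (Set.Icc (-T) T) := by
      apply ContinuousOn.add continuousOn_const
      have h1 := intervalIntegral.continuousOn_primitive_interval'
        (a := -T) (b₁ := -T) (b₂ := T) hu'ii (Set.left_mem_uIcc)
      rwa [Set.uIcc_of_le hTle] at h1
    have hucont : ContinuousOn u (Set.Icc (-T) T) := hprim.congr hac
    have humIcc : AEStronglyMeasurable u (volume.restrict (Set.Icc (-T) T)) :=
      hucont.aestronglyMeasurable measurableSet_Icc
    -- integrability of the three pieces
    have hVcont : ContinuousOn (fun t => V t (u t)) (Set.Icc (-T) T) := by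
      apply hVc.comp (continuousOn_id.prodMk hucont)
      exact fun t ht => ⟨ht, Set.mem_univ _⟩
    have hVint : IntegrableOn (fun t => V t (u t)) (Set.Icc (-T) T) :=
      hVcont.integrableOn_Icc
    have hfu_bound : ∀ t : ℝ, ‖⟪f t, u t⟫‖ ≤ fenchel G (f t) + G (u t) := by
      intro t
      have hup : ⟪u t, f t⟫ - G (u t) ≤ fenchel G (f t) :=
        aux_fenchelYoung hpos hcoer (f t) (u t)
      have hlow : ⟪-(u t), f t⟫ - G (-(u t)) ≤ fenchel G (f t) :=
        aux_fenchelYoung hpos hcoer (f t) (-(u t))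
      rw [inner_neg_left, heven] at hlow
      have hcomm : ⟪f t, u t⟫ = ⟪u t, f t⟫ := real_inner_comm _ _
      rw [Real.norm_eq_abs, abs_le]
      constructor
      · linarith
      · linarith
    have hfuint : IntegrableOn (fun t => ⟪f t, u t⟫) (Set.Icc (-T) T) := by
      refine Integrable.mono' (hf.add huG) (hfm.inner humIcc) ?_
      filter_upwards with t
      exact hfu_bound t
    -- pointwise norm bound
    have hbound : ∀ t ∈ Set.Icc (-T) T, ‖u t‖ ≤ ρ₀ := by
      intro t ht
      have h := hemb u u' hW t ht
      rw [hnorm, hρ] at h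
      have hc : Cinf * (ρ₀ / Cinf) = ρ₀ := by field_simp
      rwa [hc] at h
    -- pointwise lower bound for the integrand
    have hpt : ∀ t ∈ Set.Icc (-T) T,
        G (u' t) + (b - 1) * G (u t) - a t - fenchel G (f t)
          ≤ G (u' t) + V t (u t) + ⟪f t, u t⟫ := by
      intro t ht
      have hV := hA3 t ht (u t) (hbound t ht)
      have hlow : ⟪-(u t), f t⟫ - G (-(u t)) ≤ fenchel G (f t) :=
        aux_fenchelYoung hpos hcoer (f t) (-(u t))
      rw [inner_neg_left, heven] at hlow
      have hcomm : ⟪f t, u t⟫ = ⟪u t, f t⟫ := real_inner_comm _ _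
      rw [hcomm]
      linarith
    have hIint : IntegrableOn
        (fun t => G (u' t) + V t (u t) + ⟪f t, u t⟫) (Set.Icc (-T) T) :=
      (hu'G.add hVint).add hfuint
    have hLBint : IntegrableOn
        (fun t => G (u' t) + (b - 1) * G (u t) - a t - fenchel G (f t))
        (Set.Icc (-T) T) :=
      ((hu'G.add (huG.const_mul (b - 1))).sub ha).sub hf
    have hmono := setIntegral_mono_on hLBint hIint measurableSet_Icc hpt
    have hexp : ∫ t in Set.Icc (-T) T,
        (G (u' t) + (b - 1) * G (u t) - a t - fenchel G (f t))
        = (∫ t in Set.Icc (-T) T, G (u' t))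
          + (b - 1) * (∫ t in Set.Icc (-T) T, G (u t))
          - (∫ t in Set.Icc (-T) T, a t)
          - (∫ t in Set.Icc (-T) T, fenchel G (f t)) := by
      have h4 : IntegrableOn (fun t => G (u' t) + (b - 1) * G (u t))
          (Set.Icc (-T) T) := hu'G.add (huG.const_mul (b - 1))
      have h5 : IntegrableOn (fun t => G (u' t) + (b - 1) * G (u t) - a t)
          (Set.Icc (-T) T) := h4.sub ha
      rw [integral_sub h5 hf, integral_sub h4 ha,
        integral_add hu'G (huG.const_mul (b - 1)), integral_const_mul]
    -- norm decomposition
    have hsu0 : 0 ≤ luxNorm T G u := Real.sInf_nonneg (fun l hl => hl.1.le)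
    have hsu'0 : 0 ≤ luxNorm T G u' := Real.sInf_nonneg (fun l hl => hl.1.le)
    have hsum : luxNorm T G u + luxNorm T G u' = ρ := hnorm
    have hMu0 : 0 ≤ ∫ t in Set.Icc (-T) T, G (u t) :=
      setIntegral_nonneg measurableSet_Icc (fun t _ => hpos _)
    have hMu'0 : 0 ≤ ∫ t in Set.Icc (-T) T, G (u' t) :=
      setIntegral_nonneg measurableSet_Icc (fun t _ => hpos _)
    have hmod : min 1 (b - 1) * (ρ/2) ^ e
        ≤ (∫ t in Set.Icc (-T) T, G (u' t))
          + (b - 1) * (∫ t in Set.Icc (-T) T, G (u t)) := by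
      rcases le_or_gt (ρ/2) (luxNorm T G u') with hv | hv
      · have hk := hkey u' hu'm hu'G hv
        have h2 := mul_le_mul_of_nonneg_left hk hm0.le
        have h3 := mul_le_mul_of_nonneg_right hm1 hMu'0
        have h4 := mul_nonneg (show (0:ℝ) ≤ b - 1 by linarith) hMu0
        nlinarith
      · have hv' : ρ/2 ≤ luxNorm T G u := by linarith
        have hk := hkey u hum huG hv'
        have h2 := mul_le_mul_of_nonneg_left hk hm0.le
        have h3 := mul_le_mul_of_nonneg_right hmb hMu0
        nlinarith
    -- conclude
    rw [aux_intInt_eq hTle (fun t => fenchel G (f t)), aux_intInt_eq hTle a,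
      aux_intInt_eq hTle (fun t => G (u' t) + V t (u t) + ⟪f t, u t⟫)]
    rw [hexp] at hmono
    linarith
end
end

section
/- Let T > 0 and let G : ℝ^N → [0,∞) be a G-function. Let V : [-T,T]×ℝ^N → ℝ be continuous, and assume there exist a ∈ L¹([-T,T],ℝ), b > 1 and ρ₀ > 0 such that V(t,x) ≥ b·G(x) − a(t) whenever |x| ≤ ρ₀. Let f : [-T,T] → ℝ^N be measurable with R_{G*}(f) < ∞. Let C∞ > 0 be a constant such that ess sup_{t∈[-T,T]} |u(t)| ≤ C∞‖u‖_W for every u ∈ W¹_T L^G, set ρ = ρ₀/C∞, and assume ρ ≥ 2 and R_{G*}(f) + ∫_{-T}^{T} a(t) dt < min{1, b−1}·(ρ/2). Define J(u) = ∫_{-T}^{T} [G(u̇(t)) + V(t,u(t)) + ⟨f(t),u(t)⟩] dt. Then there exists α > 0 such that J(u) ≥ α for every u ∈ W¹_T L^G with ‖u‖_W = ρ. -/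
open MeasureTheory Set Filter
open scoped RealInnerProductSpace

noncomputable section

section Aux

variable {N : ℕ} {G : EuclideanSpace ℝ (Fin N) → ℝ}

lemma IsGFun.nonneg' (hG : IsGFun G) : ∀ x, 0 ≤ G x := hG.2.2.2.2.1
lemma IsGFun.zero' (hG : IsGFun G) : G 0 = 0 := hG.2.2.2.1
lemma IsGFun.cont' (hG : IsGFun G) : Continuous G := hG.1.continuous
lemma IsGFun.conv' (hG : IsGFun G) : ConvexOn ℝ Set.univ G := hG.2.1
lemma IsGFun.even' (hG : IsGFun G) : ∀ x, G (-x) = G x := hG.2.2.1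

lemma fenchel_set_bddAbove (hG : IsGFun G) (y : EuclideanSpace ℝ (Fin N)) :
    BddAbove {r : ℝ | ∃ x, r = ⟪x, y⟫ - G x} := by
  have h2 : ∀ᶠ x in Filter.cocompact (EuclideanSpace ℝ (Fin N)), ‖y‖ ≤ G x / ‖x‖ :=
    hG.2.2.2.2.2.eventually_ge_atTop ‖y‖
  rw [Filter.hasBasis_cocompact.eventually_iff] at h2
  obtain ⟨K, hK, hKy⟩ := h2
  obtain ⟨r, hr⟩ := hK.isBounded.subset_closedBall 0
  refine ⟨max 0 (max r 0 * ‖y‖), ?_⟩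
  rintro s ⟨x, rfl⟩
  by_cases hx : x ∈ K
  · have h1 : ‖x‖ ≤ max r 0 := by
      have := hr hx
      rw [Metric.mem_closedBall, dist_zero_right] at this
      exact this.trans (le_max_left _ _)
    have h3 : ⟪x, y⟫ ≤ ‖x‖ * ‖y‖ := real_inner_le_norm x y
    have h4 : ‖x‖ * ‖y‖ ≤ max r 0 * ‖y‖ := mul_le_mul_of_nonneg_right h1 (norm_nonneg y)
    have h5 : 0 ≤ G x := hG.nonneg' x
    have : ⟪x, y⟫ - G x ≤ max r 0 * ‖y‖ := by linarith
    exact this.trans (le_max_right _ _)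
  · have hy : ‖y‖ ≤ G x / ‖x‖ := hKy hx
    by_cases hx0 : x = 0
    · subst hx0
      simp only [inner_zero_left, hG.zero', sub_zero]
      exact le_max_left _ _
    · have hxp : 0 < ‖x‖ := norm_pos_iff.2 hx0
      have h6 : ‖y‖ * ‖x‖ ≤ G x := (le_div_iff₀ hxp).1 hy
      have h3 : ⟪x, y⟫ ≤ ‖x‖ * ‖y‖ := real_inner_le_norm x y
      have : ⟪x, y⟫ - G x ≤ 0 := by nlinarith
      exact this.trans (le_max_left _ _)

lemma le_fenchel (hG : IsGFun G) (x y : EuclideanSpace ℝ (Fin N)) :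
    ⟪x, y⟫ - G x ≤ fenchel G y :=
  le_csSup (fenchel_set_bddAbove hG y) ⟨x, rfl⟩

lemma G_inv_smul_le (hG : IsGFun G) {c : ℝ} (hc : 1 ≤ c) (x : EuclideanSpace ℝ (Fin N)) :
    G (c⁻¹ • x) ≤ c⁻¹ * G x := by
  have h0 : (0 : ℝ) < c := lt_of_lt_of_le one_pos hc
  have h1 : (0 : ℝ) ≤ c⁻¹ := by positivity
  have h2 : (0 : ℝ) ≤ 1 - c⁻¹ := by
    have : c⁻¹ ≤ 1 := inv_le_one_of_one_le₀ hc
    linarith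
  have := hG.conv'.2 (Set.mem_univ x) (Set.mem_univ (0 : EuclideanSpace ℝ (Fin N)))
    h1 h2 (by ring)
  simpa [hG.zero', smul_zero] using this

lemma G_smul_le (hG : IsGFun G) {s : ℝ} (h1 : 1 ≤ s) (h2 : s ≤ 2)
    (x : EuclideanSpace ℝ (Fin N)) :
    G (s • x) ≤ (s - 1) * G ((2 : ℝ) • x) + (2 - s) * G x := by
  have h := hG.conv'.2 (Set.mem_univ ((2 : ℝ) • x)) (Set.mem_univ x)
    (sub_nonneg.2 h1) (sub_nonneg.2 h2) (by ring)
  have hx : (s - 1) • ((2 : ℝ) • x) + (2 - s) • x = s • x := by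
    rw [smul_smul, ← add_smul]
    norm_num
    ring_nf
  rwa [hx, smul_eq_mul, smul_eq_mul] at h

lemma luxNorm_le_of_mem {T : ℝ} {v : ℝ → EuclideanSpace ℝ (Fin N)} {l : ℝ} (h : 0 < l)
    (h2 : ∫ t in (-T)..T, G (l⁻¹ • v t) ≤ 1) : luxNorm T G v ≤ l :=
  csInf_le ⟨0, fun _ hx => le_of_lt hx.1⟩ ⟨h, h2⟩

lemma modular_lower {T : ℝ} (hT : 0 < T) (hG : IsGFun G)
    {v : ℝ → EuclideanSpace ℝ (Fin N)} (hv : MemLG T G v)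
    {c : ℝ} (hc : 1 ≤ c) (hm : ∫ t in (-T)..T, G (v t) ≤ c) :
    luxNorm T G v ≤ c := by
  have hTT : -T ≤ T := by linarith
  have hc0 : (0 : ℝ) < c := lt_of_lt_of_le one_pos hc
  apply luxNorm_le_of_mem hc0
  rw [intervalIntegral.integral_of_le hTT] at hm ⊢
  have hint : IntegrableOn (fun t => G (v t)) (Set.Ioc (-T) T) :=
    hv.2.mono_set Set.Ioc_subset_Icc_self
  have hv' : AEStronglyMeasurable v (volume.restrict (Set.Ioc (-T) T)) :=
    hv.1.mono_measure (Measure.restrict_mono Set.Ioc_subset_Icc_self le_rfl)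
  have hmeas : AEStronglyMeasurable (fun t => G (c⁻¹ • v t))
      (volume.restrict (Set.Ioc (-T) T)) :=
    hG.cont'.comp_aestronglyMeasurable (hv'.const_smul c⁻¹)
  have hint2 : IntegrableOn (fun t => G (c⁻¹ • v t)) (Set.Ioc (-T) T) := by
    refine Integrable.mono' (hint.const_mul c⁻¹) hmeas ?_
    refine Filter.Eventually.of_forall fun t => ?_
    rw [Real.norm_eq_abs, abs_of_nonneg (hG.nonneg' _)]
    exact G_inv_smul_le hG hc _
  calc ∫ t in Set.Ioc (-T) T, G (c⁻¹ • v t)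
      ≤ ∫ t in Set.Ioc (-T) T, c⁻¹ * G (v t) :=
        setIntegral_mono_on hint2 (hint.const_mul _) measurableSet_Ioc
          (fun t _ => G_inv_smul_le hG hc _)
    _ = c⁻¹ * ∫ t in Set.Ioc (-T) T, G (v t) := integral_const_mul _ _
    _ ≤ 1 := by
        have := mul_le_mul_of_nonneg_left hm (inv_nonneg.2 hc0.le)
        rwa [inv_mul_cancel₀ hc0.ne'] at this

lemma luxNorm_lt_one {T : ℝ} (hT : 0 < T) (hG : IsGFun G)
    {v : ℝ → EuclideanSpace ℝ (Fin N)} (hv : MemLG T G v)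
    {B : ℝ} (hB : ∀ t ∈ Set.Ioc (-T) T, ‖v t‖ ≤ B)
    (hm : ∫ t in (-T)..T, G (v t) < 1) : luxNorm T G v < 1 := by
  have hTT : -T ≤ T := by linarith
  set B' : ℝ := max B 0 with hB'def
  have hB'0 : 0 ≤ B' := le_max_right _ _
  obtain ⟨z, _, hz2⟩ := (isCompact_closedBall (0 : EuclideanSpace ℝ (Fin N))
      (2 * B')).exists_isMaxOn ⟨0, by simp [Metric.mem_closedBall]; positivity⟩
      hG.cont'.continuousOn
  set M : ℝ := G z with hMdef
  have hMem : ∀ s : ℝ, 1 ≤ s → s ≤ 2 → ∀ t ∈ Set.Ioc (-T) T, G (s • v t) ≤ M := by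
    intro s hs1 hs2 t ht
    refine hz2 ?_
    rw [Metric.mem_closedBall, dist_zero_right, norm_smul,
      Real.norm_eq_abs, abs_of_nonneg (by linarith)]
    have hvt := hB t ht
    have hBB : B ≤ B' := le_max_left _ _
    nlinarith [norm_nonneg (v t), mul_le_mul_of_nonneg_right hs2 (norm_nonneg (v t))]
  have hμ : volume (Set.Ioc (-T) T) < ⊤ := measure_Ioc_lt_top
  have hv' : AEStronglyMeasurable v (volume.restrict (Set.Ioc (-T) T)) :=
    hv.1.mono_measure (Measure.restrict_mono Set.Ioc_subset_Icc_self le_rfl)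
  have hintS : ∀ s : ℝ, 1 ≤ s → s ≤ 2 →
      IntegrableOn (fun t => G (s • v t)) (Set.Ioc (-T) T) := by
    intro s hs1 hs2
    refine Integrable.mono' (integrableOn_const hμ.ne enorm_ne_top : IntegrableOn (fun _ => M) _ _)
      (hG.cont'.comp_aestronglyMeasurable (hv'.const_smul s)) ?_
    rw [ae_restrict_iff' measurableSet_Ioc]
    refine Filter.Eventually.of_forall fun t ht => ?_
    rw [Real.norm_eq_abs, abs_of_nonneg (hG.nonneg' _)]
    exact hMem s hs1 hs2 t ht
  have hint : IntegrableOn (fun t => G (v t)) (Set.Ioc (-T) T) :=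
    hv.2.mono_set Set.Ioc_subset_Icc_self
  have hint2 : IntegrableOn (fun t => G ((2 : ℝ) • v t)) (Set.Ioc (-T) T) :=
    hintS 2 one_le_two le_rfl
  rw [intervalIntegral.integral_of_le hTT] at hm
  set m : ℝ := ∫ t in Set.Ioc (-T) T, G (v t) with hmdef
  have hm0 : 0 ≤ m := setIntegral_nonneg measurableSet_Ioc fun t _ => hG.nonneg' _
  set M'' : ℝ := ∫ t in Set.Ioc (-T) T, G ((2 : ℝ) • v t) with hM''def
  have hM''0 : 0 ≤ M'' := setIntegral_nonneg measurableSet_Ioc fun t _ => hG.nonneg' _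
  set ε : ℝ := (1 - m) / (M'' + 1) with hεdef
  have hε : 0 < ε := div_pos (by linarith) (by linarith)
  set s : ℝ := 1 + min ε 1 with hsdef
  have hs1 : 1 < s := by
    have : 0 < min ε 1 := lt_min hε one_pos
    linarith
  have hs2 : s ≤ 2 := by
    have : min ε 1 ≤ 1 := min_le_right _ _
    linarith
  have hs0 : 0 < s := by linarith
  have hl1 : s⁻¹ < 1 := inv_lt_one_of_one_lt₀ hs1
  have hl0 : 0 < s⁻¹ := by positivity
  have hkey : ∫ t in (-T)..T, G ((s⁻¹)⁻¹ • v t) ≤ 1 := by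
    rw [inv_inv, intervalIntegral.integral_of_le hTT]
    have step1 : ∫ t in Set.Ioc (-T) T, G (s • v t)
        ≤ ∫ t in Set.Ioc (-T) T, ((s - 1) * G ((2 : ℝ) • v t) + (2 - s) * G (v t)) := by
      refine setIntegral_mono_on (hintS s hs1.le hs2) ?_ measurableSet_Ioc
        (fun t _ => G_smul_le hG hs1.le hs2 _)
      exact (hint2.const_mul _).add (hint.const_mul _)
    have step2 : ∫ t in Set.Ioc (-T) T, ((s - 1) * G ((2 : ℝ) • v t) + (2 - s) * G (v t))
        = (s - 1) * M'' + (2 - s) * m := by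
      rw [integral_add (hint2.const_mul _) (hint.const_mul _), integral_const_mul,
        integral_const_mul]
    have hsub : s - 1 = min ε 1 := by rw [hsdef]; ring
    have h1 : (s - 1) * M'' ≤ ε * M'' :=
      mul_le_mul_of_nonneg_right (by rw [hsub]; exact min_le_left _ _) hM''0
    have h2 : ε * (M'' + 1) = 1 - m := by
      rw [hεdef, div_mul_cancel₀]
      linarith
    have h3 : (2 - s) * m ≤ m := by nlinarith
    calc ∫ t in Set.Ioc (-T) T, G (s • v t) ≤ (s - 1) * M'' + (2 - s) * m := by
          rw [← step2]; exact step1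
      _ ≤ 1 := by nlinarith
  calc luxNorm T G v ≤ s⁻¹ := luxNorm_le_of_mem hl0 hkey
    _ < 1 := hl1

end Aux

/-- Lemma 3.3 of the paper (case of Theorem 1.2): the action functional is
bounded below by a positive constant on the sphere of radius ρ ≥ 2. -/
theorem mountain_pass_geometry_rho_ge_two {N : ℕ} (T : ℝ) (hT : 0 < T)
    (G : EuclideanSpace ℝ (Fin N) → ℝ) (hG : IsGFun G)
    (V : ℝ → EuclideanSpace ℝ (Fin N) → ℝ)
    (hVc : ContinuousOn (fun p : ℝ × EuclideanSpace ℝ (Fin N) => V p.1 p.2)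
      (Set.Icc (-T) T ×ˢ Set.univ))
    (a : ℝ → ℝ) (ha : IntegrableOn a (Set.Icc (-T) T)) (b : ℝ) (hb : 1 < b)
    (ρ₀ : ℝ) (hρ₀ : 0 < ρ₀)
    (hA3 : ∀ t ∈ Set.Icc (-T) T, ∀ x : EuclideanSpace ℝ (Fin N),
      ‖x‖ ≤ ρ₀ → b * G x - a t ≤ V t x)
    (f : ℝ → EuclideanSpace ℝ (Fin N))
    (hfm : AEStronglyMeasurable f (volume.restrict (Set.Icc (-T) T)))
    (hf : IntegrableOn (fun t => fenchel G (f t)) (Set.Icc (-T) T))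
    (Cinf : ℝ) (hCinf : 0 < Cinf)
    (hemb : ∀ u u' : ℝ → EuclideanSpace ℝ (Fin N), MemW T G u u' →
      ∀ t ∈ Set.Icc (-T) T, ‖u t‖ ≤ Cinf * WNorm T G u u')
    (ρ : ℝ) (hρ : ρ = ρ₀ / Cinf) (hρ2 : 2 ≤ ρ)
    (hsmall : (∫ t in (-T)..T, fenchel G (f t)) + ∫ t in (-T)..T, a t
        < min 1 (b - 1) * (ρ / 2)) :
    ∃ α > (0 : ℝ), ∀ u u' : ℝ → EuclideanSpace ℝ (Fin N), MemW T G u u' →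
      WNorm T G u u' = ρ →
      α ≤ ∫ t in (-T)..T, (G (u' t) + V t (u t) + ⟪f t, u t⟫) := by
  have hTT : -T ≤ T := by linarith
  have huIcc : Set.uIcc (-T) T = Set.Icc (-T) T := Set.uIcc_of_le hTT
  have hρpos : (0 : ℝ) < ρ := lt_of_lt_of_le two_pos hρ2
  have hρhalf : (1 : ℝ) ≤ ρ / 2 := by linarith
  have hminpos : 0 < min 1 (b - 1) := lt_min one_pos (by linarith)
  refine ⟨min 1 (b - 1) * (ρ / 2) - ((∫ t in (-T)..T, fenchel G (f t)) + ∫ t in (-T)..T, a t),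
    by linarith, ?_⟩
  intro u u' hW hNorm
  have hsup := hemb u u' hW
  obtain ⟨hu1, hu'int, hLGu, hLGu', hper⟩ := hW
  -- u is continuous on [-T, T]
  have hucont : ContinuousOn u (Set.Icc (-T) T) := by
    have hprim : ContinuousOn (fun t => u (-T) + ∫ s in (-T)..t, u' s) (Set.Icc (-T) T) := by
      refine continuousOn_const.add ?_
      have := intervalIntegral.continuousOn_primitive_interval (μ := volume)
        (a := -T) (b := T) (f := u') (by rwa [huIcc])
      rwa [huIcc] at this
    exact hprim.congr hu1
  -- sup bound
  have hbound : ∀ t ∈ Set.Icc (-T) T, ‖u t‖ ≤ ρ₀ := by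
    intro t ht
    have := hsup t ht
    rw [hNorm, hρ, mul_comm, div_mul_cancel₀ _ hCinf.ne'] at this
    exact this
  -- integrability on Ioc
  have iGu : IntegrableOn (fun t => G (u t)) (Set.Ioc (-T) T) :=
    hLGu.2.mono_set Set.Ioc_subset_Icc_self
  have iGu' : IntegrableOn (fun t => G (u' t)) (Set.Ioc (-T) T) :=
    hLGu'.2.mono_set Set.Ioc_subset_Icc_self
  have ia : IntegrableOn a (Set.Ioc (-T) T) := ha.mono_set Set.Ioc_subset_Icc_self
  have ifen : IntegrableOn (fun t => fenchel G (f t)) (Set.Ioc (-T) T) :=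
    hf.mono_set Set.Ioc_subset_Icc_self
  have iV : IntegrableOn (fun t => V t (u t)) (Set.Ioc (-T) T) := by
    have hVcont : ContinuousOn (fun t => V t (u t)) (Set.Icc (-T) T) := by
      refine hVc.comp (continuousOn_id.prodMk hucont) fun t ht => ?_
      exact Set.mk_mem_prod ht (Set.mem_univ _)
    exact (hVcont.integrableOn_compact isCompact_Icc).mono_set Set.Ioc_subset_Icc_self
  have hfm' : AEStronglyMeasurable f (volume.restrict (Set.Ioc (-T) T)) :=
    hfm.mono_measure (Measure.restrict_mono Set.Ioc_subset_Icc_self le_rfl)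
  have hum : AEStronglyMeasurable u (volume.restrict (Set.Ioc (-T) T)) :=
    hLGu.1.mono_measure (Measure.restrict_mono Set.Ioc_subset_Icc_self le_rfl)
  have hinnerbound : ∀ t, |⟪f t, u t⟫| ≤ fenchel G (f t) + G (u t) := by
    intro t
    have h1 : ⟪u t, f t⟫ - G (u t) ≤ fenchel G (f t) := le_fenchel hG _ _
    have h2 : ⟪-(u t), f t⟫ - G (-(u t)) ≤ fenchel G (f t) := le_fenchel hG _ _
    rw [inner_neg_left, hG.even'] at h2
    rw [real_inner_comm, abs_le]
    constructor <;> linarith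
  have iinner : IntegrableOn (fun t => ⟪f t, u t⟫) (Set.Ioc (-T) T) := by
    refine Integrable.mono' (ifen.add iGu) (hfm'.inner hum) ?_
    refine Filter.Eventually.of_forall fun t => ?_
    rw [Real.norm_eq_abs]
    exact hinnerbound t
  -- key comparison of integrals
  have key : ∫ t in (-T)..T, (G (u' t) + ((b - 1) * G (u t) - a t - fenchel G (f t)))
      ≤ ∫ t in (-T)..T, (G (u' t) + V t (u t) + ⟪f t, u t⟫) := by
    rw [intervalIntegral.integral_of_le hTT, intervalIntegral.integral_of_le hTT]
    refine setIntegral_mono_on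
      (iGu'.add (((iGu.const_mul _).sub ia).sub ifen))
      ((iGu'.add iV).add iinner) measurableSet_Ioc fun t ht => ?_
    have ht' := Set.Ioc_subset_Icc_self ht
    have h1 : b * G (u t) - a t ≤ V t (u t) := hA3 t ht' (u t) (hbound t ht')
    have h2 : -(fenchel G (f t) + G (u t)) ≤ ⟪f t, u t⟫ := (abs_le.1 (hinnerbound t)).1
    linarith
  -- split the lower integral
  have i1 : IntervalIntegrable (fun t => G (u' t)) volume (-T) T := by
    apply MeasureTheory.IntegrableOn.intervalIntegrable
    rw [huIcc]; exact hLGu'.2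
  have i2 : IntervalIntegrable (fun t => G (u t)) volume (-T) T := by
    apply MeasureTheory.IntegrableOn.intervalIntegrable
    rw [huIcc]; exact hLGu.2
  have i3 : IntervalIntegrable a volume (-T) T := by
    apply MeasureTheory.IntegrableOn.intervalIntegrable
    rw [huIcc]; exact ha
  have i4 : IntervalIntegrable (fun t => fenchel G (f t)) volume (-T) T := by
    apply MeasureTheory.IntegrableOn.intervalIntegrable
    rw [huIcc]; exact hf
  have hsplit : ∫ t in (-T)..T, (G (u' t) + ((b - 1) * G (u t) - a t - fenchel G (f t)))
      = (∫ t in (-T)..T, G (u' t)) + (b - 1) * (∫ t in (-T)..T, G (u t))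
        - (∫ t in (-T)..T, a t) - ∫ t in (-T)..T, fenchel G (f t) := by
    rw [intervalIntegral.integral_add i1 (((i2.const_mul _).sub i3).sub i4),
      intervalIntegral.integral_sub ((i2.const_mul _).sub i3) i4,
      intervalIntegral.integral_sub (i2.const_mul _) i3,
      intervalIntegral.integral_const_mul]
    ring
  -- modular bounds
  set m : ℝ := ∫ t in (-T)..T, G (u t) with hmdef
  set m' : ℝ := ∫ t in (-T)..T, G (u' t) with hm'def
  have hm0 : 0 ≤ m := by
    rw [hmdef, intervalIntegral.integral_of_le hTT]
    exact setIntegral_nonneg measurableSet_Ioc fun t _ => hG.nonneg' _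
  have hm'0 : 0 ≤ m' := by
    rw [hm'def, intervalIntegral.integral_of_le hTT]
    exact setIntegral_nonneg measurableSet_Ioc fun t _ => hG.nonneg' _
  have hWN : luxNorm T G u + luxNorm T G u' = ρ := hNorm
  have hmain : min 1 (b - 1) * (ρ / 2) ≤ m' + (b - 1) * m := by
    by_cases hL : ρ / 2 ≤ luxNorm T G u
    · have hm : ρ / 2 ≤ m := by
        by_contra h
        push_neg at h
        rcases le_or_gt 1 m with h1 | h1
        · have := modular_lower hT hG hLGu h1 le_rfl
          linarith
        · have := luxNorm_lt_one hT hG hLGu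
            (fun t ht => hbound t (Set.Ioc_subset_Icc_self ht)) (by linarith)
          linarith
      have h1 : min 1 (b - 1) ≤ b - 1 := min_le_right _ _
      nlinarith
    · push_neg at hL
      have hL' : ρ / 2 < luxNorm T G u' := by linarith
      have hm' : ρ / 2 ≤ m' := by
        by_contra h
        push_neg at h
        have hc : luxNorm T G u' ≤ max 1 m' :=
          modular_lower hT hG hLGu' (le_max_left _ _) (le_max_right _ _)
        have : max 1 m' ≤ ρ / 2 := max_le hρhalf h.le
        linarith
      have h1 : min 1 (b - 1) ≤ 1 := min_le_left _ _
      nlinarith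
  linarith
end
end

section
/- Let T > 0, let G : ℝ^N → [0,∞) be a G-function, let V : [-T,T]×ℝ^N → ℝ be C¹, and let u : [-T,T] → ℝ^N be absolutely continuous with derivative u̇. Suppose there exists c ∈ ℝ^N such that ∇G(u̇(t)) = c + ∫_{-T}^{t} V_x(s, u(s)) ds for a.e. t ∈ [-T,T]. Then u̇ is essentially bounded: there exists M > 0 with |u̇(t)| ≤ M for a.e. t ∈ [-T,T]. -/
open MeasureTheory Set Filter
open scoped RealInnerProductSpace

noncomputable section

lemma convex_le_inner_grad' {N : ℕ} (G : EuclideanSpace ℝ (Fin N) → ℝ)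
    (hd : ContDiff ℝ 1 G) (hc : ConvexOn ℝ Set.univ G) (h0 : G 0 = 0)
    (x : EuclideanSpace ℝ (Fin N)) : G x ≤ ⟪x, gradient G x⟫ := by
  set φ : ℝ → ℝ := fun r => G (r • x) with hφ
  have hconv : ConvexOn ℝ Set.univ φ := by
    have := hc.comp_affineMap ((LinearMap.toSpanSingleton ℝ _ x).toAffineMap)
    simp only [Function.comp_def, LinearMap.toSpanSingleton_apply] at this
    exact this
  have hder : HasDerivAt φ (fderiv ℝ G x x) 1 := by
    have h1 : HasDerivAt (fun r : ℝ => r • x) ((1:ℝ) • x) 1 :=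
      (hasDerivAt_id 1).smul_const x
    have h2 : HasFDerivAt G (fderiv ℝ G x) ((1:ℝ) • x) := by
      rw [one_smul]; exact (hd.differentiable one_ne_zero x).hasFDerivAt
    have := h2.comp_hasDerivAt 1 h1
    simp only [one_smul] at this
    exact this
  have hs := hconv.slope_le_of_hasDerivAt (mem_univ (0:ℝ)) (mem_univ 1) zero_lt_one hder
  have hslope : slope φ 0 1 = G x := by simp [slope_def_field, hφ, h0]
  rw [hslope] at hs
  have : ⟪x, gradient G x⟫ = fderiv ℝ G x x := by
    rw [real_inner_comm, gradient, InnerProductSpace.toDual_symm_apply]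
  linarith

/-- Proposition 3.2 of the paper: any solution of the Euler–Lagrange equation
has essentially bounded derivative. -/
theorem solution_deriv_bounded {N : ℕ} (T : ℝ) (hT : 0 < T)
    (G : EuclideanSpace ℝ (Fin N) → ℝ) (hG : IsGFun G)
    (V : ℝ → EuclideanSpace ℝ (Fin N) → ℝ)
    (hV : ContDiffOn ℝ 1 (fun p : ℝ × EuclideanSpace ℝ (Fin N) => V p.1 p.2)
      (Set.Icc (-T) T ×ˢ Set.univ))
    (u u' : ℝ → EuclideanSpace ℝ (Fin N))
    (hAC : ∀ t ∈ Set.Icc (-T) T, u t = u (-T) + ∫ s in (-T)..t, u' s)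
    (hint : IntegrableOn u' (Set.Icc (-T) T))
    (c : EuclideanSpace ℝ (Fin N))
    (heq : ∀ᵐ t ∂(volume.restrict (Set.Icc (-T) T)),
      gradient G (u' t) = c + ∫ s in (-T)..t, gradient (V s) (u s)) :
    ∃ M > (0 : ℝ), ∀ᵐ t ∂(volume.restrict (Set.Icc (-T) T)), ‖u' t‖ ≤ M := by
  obtain ⟨hGd, hGc, _, hG0, _, hGt⟩ := hG
  have hTT : -T ≤ T := by linarith
  have huIcc : uIcc (-T) T = Set.Icc (-T) T := uIcc_of_le hTT
  -- u is continuous on Icc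
  have hu : ContinuousOn u (Set.Icc (-T) T) := by
    have h1 : ContinuousOn (fun t => u (-T) + ∫ s in (-T)..t, u' s) (Set.Icc (-T) T) := by
      apply continuousOn_const.add
      have := intervalIntegral.continuousOn_primitive_interval (a := -T) (b := T) (f := u') (μ := volume)
        (by rwa [huIcc])
      rwa [huIcc] at this
    exact h1.congr hAC
  -- the integrand s ↦ ∇ₓV(s, u s) is continuous on Icc
  have hgcont : ContinuousOn (fun s => gradient (V s) (u s)) (Set.Icc (-T) T) := by
    set W : ℝ × EuclideanSpace ℝ (Fin N) → ℝ := fun p => V p.1 p.2 with hW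
    set S : Set (ℝ × EuclideanSpace ℝ (Fin N)) := Set.Icc (-T) T ×ˢ Set.univ with hS
    have hSu : UniqueDiffOn ℝ S :=
      (uniqueDiffOn_Icc (by linarith : -T < T)).prod uniqueDiffOn_univ
    set J : (EuclideanSpace ℝ (Fin N)) →L[ℝ] ℝ × (EuclideanSpace ℝ (Fin N)) :=
      (0 : (EuclideanSpace ℝ (Fin N)) →L[ℝ] ℝ).prod
        (ContinuousLinearMap.id ℝ (EuclideanSpace ℝ (Fin N))) with hJ
    have key : ∀ s ∈ Set.Icc (-T) T, ∀ x : EuclideanSpace ℝ (Fin N),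
        gradient (V s) x =
          (InnerProductSpace.toDual ℝ (EuclideanSpace ℝ (Fin N))).symm
            ((fderivWithin ℝ W S (s, x)).comp J) := by
      intro s hs x
      have hmem : (s, x) ∈ S := ⟨hs, mem_univ x⟩
      have hWd : HasFDerivWithinAt W (fderivWithin ℝ W S (s, x)) S (s, x) :=
        ((hV.differentiableOn one_ne_zero) (s, x) hmem).hasFDerivWithinAt
      have hg : HasFDerivAt (fun y : EuclideanSpace ℝ (Fin N) => (s, y)) J x :=
        HasFDerivAt.prodMk (hasFDerivAt_const s x) (hasFDerivAt_id x)
      have hcomp : HasFDerivAt (V s) ((fderivWithin ℝ W S (s, x)).comp J) x := by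
        have := hWd.comp x (hg.hasFDerivWithinAt (s := Set.univ))
          (fun y _ => (⟨hs, mem_univ y⟩ : (s, y) ∈ S))
        rw [← hasFDerivWithinAt_univ]
        exact this
      exact (hasFDerivAt_iff_hasGradientAt.mp hcomp).gradient
    have hfc : ContinuousOn (fderivWithin ℝ W S) S :=
      hV.continuousOn_fderivWithin hSu le_rfl
    have hγ : ContinuousOn (fun s : ℝ => ((s, u s) : ℝ × EuclideanSpace ℝ (Fin N)))
        (Set.Icc (-T) T) := (continuousOn_id).prodMk hu
    have hmaps : Set.MapsTo (fun s : ℝ => ((s, u s) : ℝ × EuclideanSpace ℝ (Fin N)))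
        (Set.Icc (-T) T) S := fun s hs => ⟨hs, mem_univ _⟩
    have hcJ : Continuous fun q : (ℝ × EuclideanSpace ℝ (Fin N)) →L[ℝ] ℝ => q.comp J :=
      ((ContinuousLinearMap.compSL (EuclideanSpace ℝ (Fin N))
        (ℝ × EuclideanSpace ℝ (Fin N)) ℝ (RingHom.id ℝ) (RingHom.id ℝ)).flip J).continuous
    have : ContinuousOn
        (fun s : ℝ => (InnerProductSpace.toDual ℝ (EuclideanSpace ℝ (Fin N))).symm
          ((fderivWithin ℝ W S (s, u s)).comp J)) (Set.Icc (-T) T) :=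
      (InnerProductSpace.toDual ℝ (EuclideanSpace ℝ (Fin N))).symm.continuous.comp_continuousOn
        (hcJ.comp_continuousOn (hfc.comp hγ hmaps))
    exact this.congr (fun s hs => key s hs (u s))
  -- the integrand is integrable, hence uniform bound on the primitive
  set g : ℝ → EuclideanSpace ℝ (Fin N) := fun s => gradient (V s) (u s) with hg
  have hgint : IntervalIntegrable g volume (-T) T := by
    rw [intervalIntegrable_iff_integrableOn_Icc_of_le hTT]
    exact hgcont.integrableOn_Icc
  set C : ℝ := ∫ s in (-T)..T, ‖g s‖ with hC
  have hC0 : 0 ≤ C :=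
    intervalIntegral.integral_nonneg hTT (fun s _ => norm_nonneg _)
  have hbound : ∀ t ∈ Set.Icc (-T) T, ‖∫ s in (-T)..t, g s‖ ≤ C := by
    intro t ht
    have h1 : ‖∫ s in (-T)..t, g s‖ ≤ ∫ s in (-T)..t, ‖g s‖ :=
      intervalIntegral.norm_integral_le_integral_norm ht.1
    have h2 : (∫ s in (-T)..t, ‖g s‖) ≤ C := by
      apply intervalIntegral.integral_mono_interval le_rfl ht.1 ht.2
      · exact Filter.Eventually.of_forall (fun s => norm_nonneg _)
      · exact hgint.norm
    linarith
  -- coercivity of the gradient of G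
  set R : ℝ := ‖c‖ + C with hR
  have hR0 : 0 ≤ R := add_nonneg (norm_nonneg _) hC0
  obtain ⟨K, hKc, hK⟩ : ∃ K : Set (EuclideanSpace ℝ (Fin N)), IsCompact K ∧
      ∀ x ∉ K, R + 1 ≤ G x / ‖x‖ := by
    have := (tendsto_atTop.mp hGt) (R + 1)
    obtain ⟨K, hKc, hKs⟩ := Filter.hasBasis_cocompact.eventually_iff.mp this
    exact ⟨K, hKc, fun x hx => hKs hx⟩
  obtain ⟨M₀, hM₀⟩ := hKc.isBounded.subset_closedBall 0
  set M : ℝ := max M₀ 1 with hM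
  have hM1 : (1:ℝ) ≤ M := le_max_right _ _
  have hgradbig : ∀ x : EuclideanSpace ℝ (Fin N), M < ‖x‖ → R + 1 ≤ ‖gradient G x‖ := by
    intro x hx
    have hxpos : 0 < ‖x‖ := lt_of_lt_of_le (by linarith) hx.le
    have hxK : x ∉ K := by
      intro hxK
      have := hM₀ hxK
      rw [Metric.mem_closedBall, dist_zero_right] at this
      have : ‖x‖ ≤ M := this.trans (le_max_left _ _)
      linarith
    have h1 : (R + 1) * ‖x‖ ≤ G x := by
      have := hK x hxK
      calc (R + 1) * ‖x‖ ≤ (G x / ‖x‖) * ‖x‖ := by nlinarith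
        _ = G x := by field_simp
    have h2 : G x ≤ ⟪x, gradient G x⟫ := convex_le_inner_grad' G hGd hGc hG0 x
    have h3 : ⟪x, gradient G x⟫ ≤ ‖x‖ * ‖gradient G x‖ := real_inner_le_norm _ _
    nlinarith
  refine ⟨M, by linarith, ?_⟩
  have hmemae : ∀ᵐ t ∂(volume.restrict (Set.Icc (-T) T)), t ∈ Set.Icc (-T) T :=
    ae_restrict_mem measurableSet_Icc
  filter_upwards [heq, hmemae] with t ht htmem
  by_contra hcon
  push_neg at hcon
  have h1 : R + 1 ≤ ‖gradient G (u' t)‖ := hgradbig _ hcon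
  have h2 : ‖gradient G (u' t)‖ ≤ R := by
    rw [ht]
    calc ‖c + ∫ s in (-T)..t, g s‖ ≤ ‖c‖ + ‖∫ s in (-T)..t, g s‖ := norm_add_le _ _
      _ ≤ ‖c‖ + C := by linarith [hbound t htmem]
  linarith
end
end

section
/- Let G : ℝ^N → [0,∞) be a G-function satisfying the Δ₂ condition globally with constant K₁ > 2 (G(2x) ≤ K₁G(x) for all x) and the ∇₂ condition globally with constant K₂ > 1 (G(x) ≤ (1/(2K₂))G(K₂x) for all x). Then for every x ∈ ℝ^N, (2K₂/(2K₂ − 1))·G(x) ≤ ⟨x, ∇G(x)⟩ ≤ K₁·G(x). -/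
open MeasureTheory Set Filter
open scoped RealInnerProductSpace

noncomputable section

lemma grad_convex_ineq {N : ℕ} (G : EuclideanSpace ℝ (Fin N) → ℝ)
    (hd : ContDiff ℝ 1 G) (hc : ConvexOn ℝ Set.univ G)
    (x y : EuclideanSpace ℝ (Fin N)) :
    G x + ⟪y - x, gradient G x⟫ ≤ G y := by
  set φ : ℝ → ℝ := fun t => G (x + t • (y - x)) with hφ
  have hconv : ConvexOn ℝ Set.univ φ := by
    have haff := hc.comp_affineMap (AffineMap.lineMap x y)
    have heq : (G ∘ ⇑(AffineMap.lineMap x y)) = φ := by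
      funext t
      exact congrArg G (by simp [AffineMap.lineMap_apply_module, φ]; module)
    simpa [heq] using haff
  have hline : HasDerivAt (fun t : ℝ => x + t • (y - x)) (y - x) 0 := by
    simpa using ((hasDerivAt_id (0:ℝ)).smul_const (y - x)).const_add x
  have hgrad : HasGradientAt G (gradient G x) x :=
    ((hd.differentiable one_ne_zero) x).hasGradientAt
  have hfd : HasFDerivAt G ((InnerProductSpace.toDual ℝ _) (gradient G x)) x :=
    hasGradientAt_iff_hasFDerivAt.mp hgrad
  have hderiv : HasDerivAt φ (⟪gradient G x, y - x⟫) 0 := by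
    have hfd' : HasFDerivAt G ((InnerProductSpace.toDual ℝ _) (gradient G x))
        ((fun t : ℝ => x + t • (y - x)) 0) := by simpa using hfd
    have := hfd'.comp_hasDerivAt 0 hline
    exact this
  have hslope := hconv.le_slope_of_hasDerivAt (Set.mem_univ (0:ℝ))
    (Set.mem_univ (1:ℝ)) one_pos hderiv
  have : slope φ 0 1 = G y - G x := by
    simp [slope, φ]
  rw [this] at hslope
  rw [real_inner_comm]
  linarith


/-- Appendix, inequality (A.1):
`(2K₂/(2K₂−1)) G(x) ≤ ⟨x,∇G(x)⟩ ≤ K₁ G(x)` for all `x`. -/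
theorem inner_grad_bounds {N : ℕ}
    (G : EuclideanSpace ℝ (Fin N) → ℝ) (hG : IsGFun G)
    (K₁ : ℝ) (hK₁ : 2 < K₁)
    (hDel2 : ∀ x : EuclideanSpace ℝ (Fin N), G ((2 : ℝ) • x) ≤ K₁ * G x)
    (K₂ : ℝ) (hK₂ : 1 < K₂)
    (hNab2 : ∀ x : EuclideanSpace ℝ (Fin N), G x ≤ (1 / (2 * K₂)) * G (K₂ • x)) :
    ∀ x : EuclideanSpace ℝ (Fin N),
      (2 * K₂ / (2 * K₂ - 1)) * G x ≤ ⟪x, gradient G x⟫ ∧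
        ⟪x, gradient G x⟫ ≤ K₁ * G x := by
  obtain ⟨hd, hc, -, -, hpos, -⟩ := hG
  intro x
  have key := grad_convex_ineq G hd hc x
  have hK₂0 : (0:ℝ) < K₂ := by linarith
  constructor
  · -- lower bound
    have h1 := key (K₂⁻¹ • x)
    have h2 : G (K₂⁻¹ • x) ≤ (1 / (2 * K₂)) * G x := by
      have := hNab2 (K₂⁻¹ • x)
      rwa [smul_smul, mul_inv_cancel₀ (ne_of_gt hK₂0), one_smul] at this
    have h3 : ⟪K₂⁻¹ • x - x, gradient G x⟫ = (K₂⁻¹ - 1) * ⟪x, gradient G x⟫ := by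
      rw [show K₂⁻¹ • x - x = (K₂⁻¹ - 1) • x by module, real_inner_smul_left]
    rw [h3] at h1
    have hgx := hpos x
    have hI : (1 - K₂⁻¹) * ⟪x, gradient G x⟫ ≥ (1 - 1/(2*K₂)) * G x := by nlinarith
    have hinv : K₂⁻¹ = 1 / K₂ := by rw [one_div]
    rw [hinv] at hI
    have e1 : (0:ℝ) < 2 * K₂ - 1 := by linarith
    have e2 : (0:ℝ) < K₂ - 1 := by linarith
    have hne : K₂ ≠ 0 := ne_of_gt hK₂0
    have hI' : (2*K₂^2 - K₂) * G x ≤ (2*K₂^2 - 2*K₂) * ⟪x, gradient G x⟫ := by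
      have h := mul_le_mul_of_nonneg_left hI (by positivity : (0:ℝ) ≤ 2*K₂^2)
      have e3 : 2*K₂^2 * ((1 - 1/(2*K₂)) * G x) = (2*K₂^2 - K₂) * G x := by
        field_simp
      have e4 : 2*K₂^2 * ((1 - 1/K₂) * ⟪x, gradient G x⟫)
          = (2*K₂^2 - 2*K₂) * ⟪x, gradient G x⟫ := by field_simp
      rw [e3, e4] at h; exact h
    rw [div_mul_eq_mul_div, div_le_iff₀ e1]
    by_contra hcon
    push_neg at hcon
    have hsc := mul_lt_mul_of_pos_left hcon (show (0:ℝ) < 2*K₂^2 - 2*K₂ by nlinarith)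
    nlinarith [mul_le_mul_of_nonneg_left hI' e1.le, mul_nonneg hK₂0.le hgx]
  · have h1 := key ((2:ℝ) • x)
    have h3 : ⟪(2:ℝ) • x - x, gradient G x⟫ = ⟪x, gradient G x⟫ := by
      rw [show (2:ℝ) • x - x = x by module]
    rw [h3] at h1
    have := hDel2 x
    have hgx := hpos x
    linarith
end
end
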